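/- arXiv:2211.14566 — 4 statements merged into one kernel-verified Lean document; each statement's English description precedes it below -/
import Mathlib

section
/- For β a nonnegative integer, the identity z^β ψ_{n,m}^{α,β}(z, z̄) = α^{(n-m-β)/2} H_{m+β,n}(√α z, √α z̄) holds on ℂ*, where H_{p,q}(z, z̄) = (-1)^{p+q} e^{|z|²} ∂^{p+q}/(∂z̄^p ∂z^q)(e^{-|z|²}) are the Itô–Hermite polynomials (with parameter 1). -/
open Complex MeasureTheory

noncomputable def wdz (f : ℂ → ℂ) (z : ℂ) : ℂ :=
  (1/2) * (fderiv ℝ f z 1 - Complex.I * fderiv ℝ f z Complex.I)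

noncomputable def wdzbar (f : ℂ → ℂ) (z : ℂ) : ℂ :=
  (1/2) * (fderiv ℝ f z 1 + Complex.I * fderiv ℝ f z Complex.I)

/-- The poly-meromorphic Itô–Hermite function `ψ_{n,m}^{α,β}`, defined via the
Rodrigues formula with iterated Wirtinger derivatives and principal-branch powers. -/
noncomputable def psi (α β : ℝ) (n : ℕ) (m : ℤ) (z : ℂ) : ℂ :=
  (-1 : ℂ)^n * z ^ (-(β:ℂ)) * Complex.exp (α * ‖z‖ ^ 2) *
    (wdz^[n] (fun w => w ^ ((β:ℂ) + (m:ℂ)) * Complex.exp (-(α * ‖w‖ ^ 2)))) z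

/-- Generalized Laguerre polynomial `L_n^{(γ)}(x)` with complex parameter and argument. -/
noncomputable def genLaguerre (n : ℕ) (γ : ℂ) (x : ℂ) : ℂ :=
  ∑ k ∈ Finset.range (n+1),
    (-1 : ℂ)^k * (∏ j ∈ Finset.range (n-k), (γ + k + 1 + j)) /
      ((n-k).factorial * k.factorial) * x^k

/-- Itô–Hermite polynomial `H_{p,q}^α(z, z̄)`. -/
noncomputable def IH (α : ℝ) (p q : ℕ) (z : ℂ) : ℂ :=
  (-1 : ℂ)^(p+q) * Complex.exp (α * ‖z‖ ^ 2) *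
    (wdzbar^[p] (wdz^[q] (fun w => Complex.exp (-(α * ‖w‖ ^ 2))))) z

/-! ### Auxiliary development -/

noncomputable def fab (c : ℂ) (a b : ℕ) (w : ℂ) : ℂ :=
  w ^ a * (starRingEnd ℂ w) ^ b * Complex.exp (c * (w * starRingEnd ℂ w))

lemma fab_hasFDerivAt (c : ℂ) (a b : ℕ) (z : ℂ) :
    ∃ L : ℂ →L[ℝ] ℂ, HasFDerivAt (fab c a b) L z ∧ ∀ v,
      L v = ((a * z^(a-1) * (starRingEnd ℂ z)^b + c * z^a * (starRingEnd ℂ z)^(b+1)) *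
              Complex.exp (c*(z*starRingEnd ℂ z))) * v
        + ((b * z^a * (starRingEnd ℂ z)^(b-1) + c * z^(a+1) * (starRingEnd ℂ z)^b) *
              Complex.exp (c*(z*starRingEnd ℂ z))) * starRingEnd ℂ v := by
  have hconj : HasFDerivAt (fun w : ℂ => starRingEnd ℂ w)
      (Complex.conjCLE.toContinuousLinearMap) z :=
    Complex.conjCLE.toContinuousLinearMap.hasFDerivAt
  have h1 := ((hasDerivAt_pow a z).hasFDerivAt).restrictScalars ℝ
  have h2 := (((hasDerivAt_pow b (starRingEnd ℂ z)).hasFDerivAt).restrictScalars ℝ).comp z hconj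
  have h2' : HasFDerivAt (fun w : ℂ => (starRingEnd ℂ w) ^ b) _ z := h2
  have hmul := (hasFDerivAt_id (𝕜 := ℝ) z).mul hconj
  have hexp := (hmul.const_mul c).cexp
  have h := (h1.mul h2').mul hexp
  refine ⟨_, h, fun v => ?_⟩
  simp [ContinuousLinearMap.smul_apply, ContinuousLinearMap.comp_apply,
    ContinuousLinearMap.coe_restrictScalars', ContinuousLinearMap.smulRight_apply,
    ContinuousLinearMap.one_apply, Complex.conjCLE_apply, smul_eq_mul]
  ring

lemma fab_diff (c : ℂ) (a b : ℕ) (z : ℂ) : DifferentiableAt ℝ (fab c a b) z := by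
  obtain ⟨L, h, -⟩ := fab_hasFDerivAt c a b z
  exact h.differentiableAt

lemma wdz_fab (c : ℂ) (a b : ℕ) (z : ℂ) :
    wdz (fab c a b) z =
      (a * z^(a-1) * (starRingEnd ℂ z)^b + c * z^a * (starRingEnd ℂ z)^(b+1)) *
        Complex.exp (c*(z*starRingEnd ℂ z)) := by
  obtain ⟨L, h, hL⟩ := fab_hasFDerivAt c a b z
  rw [wdz, h.fderiv, hL, hL]
  simp [Complex.conj_I]
  ring_nf
  simp only [Complex.I_sq]
  ring

lemma wdzbar_fab (c : ℂ) (a b : ℕ) (z : ℂ) :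
    wdzbar (fab c a b) z =
      (b * z^a * (starRingEnd ℂ z)^(b-1) + c * z^(a+1) * (starRingEnd ℂ z)^b) *
        Complex.exp (c*(z*starRingEnd ℂ z)) := by
  obtain ⟨L, h, hL⟩ := fab_hasFDerivAt c a b z
  rw [wdzbar, h.fderiv, hL, hL]
  simp [Complex.conj_I]
  ring_nf
  simp only [Complex.I_sq]
  ring

lemma wdz_finsum {s : Finset ℕ} (g : ℕ → ℂ → ℂ) (z : ℂ)
    (hg : ∀ k ∈ s, DifferentiableAt ℝ (g k) z) :
    wdz (fun w => ∑ k ∈ s, g k w) z = ∑ k ∈ s, wdz (g k) z := by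
  unfold wdz
  have h : ∀ v : ℂ, fderiv ℝ (fun w => ∑ k ∈ s, g k w) z v
      = ∑ k ∈ s, fderiv ℝ (g k) z v := by
    intro v
    rw [fderiv_fun_sum hg, ContinuousLinearMap.sum_apply]
  rw [h, h, Finset.mul_sum, ← Finset.sum_sub_distrib, Finset.mul_sum]

lemma wdzbar_finsum {s : Finset ℕ} (g : ℕ → ℂ → ℂ) (z : ℂ)
    (hg : ∀ k ∈ s, DifferentiableAt ℝ (g k) z) :
    wdzbar (fun w => ∑ k ∈ s, g k w) z = ∑ k ∈ s, wdzbar (g k) z := by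
  unfold wdzbar
  have h : ∀ v : ℂ, fderiv ℝ (fun w => ∑ k ∈ s, g k w) z v
      = ∑ k ∈ s, fderiv ℝ (g k) z v := by
    intro v
    rw [fderiv_fun_sum hg, ContinuousLinearMap.sum_apply]
  rw [h, h, Finset.mul_sum, ← Finset.sum_add_distrib, Finset.mul_sum]

lemma wdz_const_mul (C : ℂ) (f : ℂ → ℂ) (z : ℂ) (hf : DifferentiableAt ℝ f z) :
    wdz (fun w => C * f w) z = C * wdz f z := by
  unfold wdz
  rw [fderiv_const_mul hf]
  simp [smul_eq_mul]
  ring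

lemma wdzbar_const_mul (C : ℂ) (f : ℂ → ℂ) (z : ℂ) (hf : DifferentiableAt ℝ f z) :
    wdzbar (fun w => C * f w) z = C * wdzbar f z := by
  unfold wdzbar
  rw [fderiv_const_mul hf]
  simp [smul_eq_mul]
  ring

lemma pascal_sum (n : ℕ) (s : ℕ → ℂ) :
    ∑ k ∈ Finset.range (n+1), ((n.choose k : ℂ) * s (k+1) + (n.choose k : ℂ) * s k)
      = ∑ j ∈ Finset.range (n+2), ((n+1).choose j : ℂ) * s j := by
  have h2 : ∑ k ∈ Finset.range (n+1), ((n.choose k : ℂ)) * s k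
      = ∑ j ∈ Finset.range (n+2), (n.choose j : ℂ) * s j := by
    rw [Finset.sum_range_succ (fun j => ((n.choose j : ℕ) : ℂ) * s j) (n+1)]
    simp
  rw [Finset.sum_add_distrib, h2,
    Finset.sum_range_succ' (fun j => (((n+1).choose j : ℕ) : ℂ) * s j) (n+1),
    Finset.sum_range_succ' (fun j => ((n.choose j : ℕ) : ℂ) * s j) (n+1)]
  simp only [Nat.choose_succ_succ, Nat.cast_add, add_mul, Nat.choose_zero_right]
  rw [Finset.sum_add_distrib]
  ring

lemma iter_wdz_fab (c : ℂ) (N : ℕ) (n : ℕ) :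
    wdz^[n] (fab c N 0) = fun z => ∑ k ∈ Finset.range (n+1),
      ((n.choose k * N.descFactorial k : ℕ) : ℂ) * c^(n-k) * fab c (N-k) (n-k) z := by
  induction n with
  | zero => funext z; simp
  | succ n IH =>
    rw [Function.iterate_succ_apply', IH]
    funext z
    rw [wdz_finsum _ z (fun k _ => ((fab_diff c (N-k) (n-k) z).const_mul _))]
    have step : ∀ k ∈ Finset.range (n+1),
        wdz (fun w => ((n.choose k * N.descFactorial k : ℕ) : ℂ) * c^(n-k) *
            fab c (N-k) (n-k) w) z
          = ((n.choose k : ℕ) : ℂ) *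
              (fun j => ((N.descFactorial j : ℕ) : ℂ) * c^(n+1-j) * fab c (N-j) (n+1-j) z) (k+1)
            + ((n.choose k : ℕ) : ℂ) *
              (fun j => ((N.descFactorial j : ℕ) : ℂ) * c^(n+1-j) * fab c (N-j) (n+1-j) z) k := by
      intro k hk
      have hkn : k ≤ n := Nat.lt_succ_iff.mp (Finset.mem_range.mp hk)
      have e1 : n + 1 - (k+1) = n - k := by omega
      have e2 : n + 1 - k = (n - k) + 1 := by omega
      have e3 : N - (k+1) = N - k - 1 := by omega
      rw [wdz_const_mul _ _ _ (fab_diff c (N-k) (n-k) z), wdz_fab]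
      simp only [e1, e2, e3, Nat.descFactorial_succ, fab]
      push_cast
      ring
    rw [Finset.sum_congr rfl step, pascal_sum n
      (fun j => ((N.descFactorial j : ℕ) : ℂ) * c^(n+1-j) * fab c (N-j) (n+1-j) z)]
    refine Finset.sum_congr rfl fun j hj => ?_
    push_cast
    ring

lemma iter_wdzbar_fab (c K : ℂ) (A M : ℕ) (N : ℕ) :
    wdzbar^[N] (fun z => K * fab c A M z) = fun z => ∑ k ∈ Finset.range (N+1),
      K * ((N.choose k * M.descFactorial k : ℕ) : ℂ) * c^(N-k) * fab c (A+(N-k)) (M-k) z := by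
  induction N with
  | zero => funext z; simp
  | succ N IH =>
    rw [Function.iterate_succ_apply', IH]
    funext z
    rw [wdzbar_finsum _ z (fun k _ => ((fab_diff c (A+(N-k)) (M-k) z).const_mul _))]
    have step : ∀ k ∈ Finset.range (N+1),
        wdzbar (fun w => K * ((N.choose k * M.descFactorial k : ℕ) : ℂ) * c^(N-k) *
            fab c (A+(N-k)) (M-k) w) z
          = ((N.choose k : ℕ) : ℂ) *
              (fun j => K * ((M.descFactorial j : ℕ) : ℂ) * c^(N+1-j) * fab c (A+(N+1-j)) (M-j) z) (k+1)
            + ((N.choose k : ℕ) : ℂ) *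
              (fun j => K * ((M.descFactorial j : ℕ) : ℂ) * c^(N+1-j) * fab c (A+(N+1-j)) (M-j) z) k := by
      intro k hk
      have hkn : k ≤ N := Nat.lt_succ_iff.mp (Finset.mem_range.mp hk)
      have e1 : N + 1 - (k+1) = N - k := by omega
      have e2 : A + (N + 1 - k) = (A + (N - k)) + 1 := by omega
      have e3 : M - (k+1) = M - k - 1 := by omega
      have e4 : N + 1 - k = (N - k) + 1 := by omega
      rw [wdzbar_const_mul _ _ _ (fab_diff c (A+(N-k)) (M-k) z), wdzbar_fab]
      simp only [e1, e2, e3, e4, Nat.descFactorial_succ, fab]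
      push_cast
      ring
    rw [Finset.sum_congr rfl step, pascal_sum N
      (fun j => K * ((M.descFactorial j : ℕ) : ℂ) * c^(N+1-j) * fab c (A+(N+1-j)) (M-j) z)]
    refine Finset.sum_congr rfl fun j hj => ?_
    push_cast
    ring

lemma iter_wdz_fab00 (c : ℂ) (n : ℕ) :
    wdz^[n] (fab c 0 0) = fun z => c^n * fab c 0 n z := by
  rw [iter_wdz_fab]
  funext z
  rw [Finset.sum_eq_single 0]
  · simp
  · intro k hk hk0
    have h0 : (0:ℕ).descFactorial k = 0 := by
      cases k with
      | zero => exact absurd rfl hk0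
      | succ k => simp [Nat.descFactorial_succ]
    simp [h0]
  · intro h; exact absurd (Finset.mem_range.mpr (Nat.succ_pos n)) h

lemma abs_sq_eq (w : ℂ) : ((‖w‖ : ℝ) : ℂ)^2 = w * starRingEnd ℂ w := by
  rw [Complex.mul_conj, ← Complex.ofReal_pow, Complex.sq_norm]

lemma neg_one_pow_eq (a k c : ℕ) (h : a = 2*c + k) : ((-1:ℂ))^a = (-1:ℂ)^k := by
  rw [h, pow_add, pow_mul]
  simp

theorem stmt1 (α : ℝ) (hα : 0 < α) (β : ℕ) (n : ℕ) (m : ℤ) (hm : 0 ≤ m + β) (z : ℂ)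
    (hz : z ≠ 0) :
    z ^ β * psi α β n m z =
      (((α : ℝ) ^ (((n:ℝ) - m - β)/2) : ℝ) : ℂ) *
        IH 1 (m + β).toNat n ((Real.sqrt α : ℂ) * z) := by
  set N := (m + β).toNat with hNdef
  set w : ℂ := (Real.sqrt α : ℂ) * z with hwdef
  have hNZ : ((N : ℕ) : ℤ) = m + β := Int.toNat_of_nonneg hm
  have hNr : ((N : ℕ) : ℝ) = (m:ℝ) + (β:ℝ) := by exact_mod_cast congrArg (fun t : ℤ => (t:ℝ)) hNZ
  have hNc : ((N : ℕ) : ℂ) = (((β:ℝ)):ℂ) + (m:ℂ) := by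
    have := congrArg (fun t : ℤ => (t:ℂ)) hNZ
    push_cast at this
    rw [this, add_comm]
    norm_cast
  -- rewrite the inner function of psi
  have hF : (fun u : ℂ => u ^ ((((β:ℝ)):ℂ) + (m:ℂ)) * Complex.exp (-(α * ‖u‖ ^ 2)))
      = fab (-(α:ℂ)) N 0 := by
    funext u
    rw [← hNc, Complex.cpow_natCast]
    simp only [fab, pow_zero, mul_one]
    rw [abs_sq_eq u, neg_mul]
  -- rewrite the inner function of IH
  have hG : (fun u : ℂ => Complex.exp (-((1:ℝ) * ‖u‖ ^ 2))) = fab (-1:ℂ) 0 0 := by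
    funext u
    simp only [fab, pow_zero, one_mul, mul_one, Complex.ofReal_one, neg_mul]
    rw [abs_sq_eq u]
  have hzb : z ^ β * z ^ (-(((β:ℝ)):ℂ)) = 1 := by
    have hb : (((β:ℝ)):ℂ) = ((β:ℕ):ℂ) := by push_cast; ring
    rw [hb, Complex.cpow_neg, Complex.cpow_natCast]
    exact mul_inv_cancel₀ (pow_ne_zero β hz)
  have hEψ : Complex.exp ((α:ℝ) * ‖z‖ ^ 2 : ℂ) *
      Complex.exp ((-(α:ℂ)) * (z * starRingEnd ℂ z)) = 1 := by
    rw [← Complex.exp_add, abs_sq_eq z]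
    rw [show ((α:ℂ)) * (z * starRingEnd ℂ z) + (-(α:ℂ)) * (z * starRingEnd ℂ z) = 0 by ring]
    exact Complex.exp_zero
  have hE1 : Complex.exp (((1:ℝ):ℂ) * ((‖w‖ : ℝ):ℂ) ^ 2) *
      Complex.exp ((-1:ℂ) * (w * starRingEnd ℂ w)) = 1 := by
    rw [← Complex.exp_add, abs_sq_eq w]
    rw [show ((1:ℝ):ℂ) * (w * starRingEnd ℂ w) + (-1:ℂ) * (w * starRingEnd ℂ w) = 0 by
      simp]
    exact Complex.exp_zero
  -- step 1: LHS as explicit polynomial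
  have hpsi : z ^ β * psi α β n m z
      = (-1:ℂ)^n * ∑ k ∈ Finset.range (n+1),
          ((n.choose k * N.descFactorial k : ℕ) : ℂ) * (-(α:ℂ))^(n-k) *
            z^(N-k) * (starRingEnd ℂ z)^(n-k) := by
    unfold psi
    rw [hF, iter_wdz_fab]
    simp only [fab]
    rw [Finset.mul_sum, Finset.mul_sum, Finset.mul_sum]
    refine Finset.sum_congr rfl fun k hk => ?_
    have R := ((n.choose k * N.descFactorial k : ℕ) : ℂ) * (-(α:ℂ))^(n-k) *
            z^(N-k) * (starRingEnd ℂ z)^(n-k)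
    linear_combination
      (Complex.exp ((α:ℝ) * ‖z‖ ^ 2 : ℂ) *
        Complex.exp ((-(α:ℂ)) * (z * starRingEnd ℂ z)) *
        ((-1:ℂ)^n * (((n.choose k * N.descFactorial k : ℕ) : ℂ) * (-(α:ℂ))^(n-k) *
            z^(N-k) * (starRingEnd ℂ z)^(n-k)))) * hzb
      + ((-1:ℂ)^n * (((n.choose k * N.descFactorial k : ℕ) : ℂ) * (-(α:ℂ))^(n-k) *
            z^(N-k) * (starRingEnd ℂ z)^(n-k))) * hEψ
  rw [hpsi]
  simp only [IH]
  rw [hG, iter_wdz_fab00, iter_wdzbar_fab]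
  simp only [fab, Nat.zero_add]
  -- auxiliary facts
  have hDn : ∀ k : ℕ, N.choose k * n.descFactorial k = n.choose k * N.descFactorial k := by
    intro k
    rw [Nat.descFactorial_eq_factorial_mul_choose, Nat.descFactorial_eq_factorial_mul_choose]
    ring
  have halpha : ∀ k : ℕ, k ≤ n → k ≤ N →
      (((α : ℝ) ^ (((n:ℝ) - m - β)/2) : ℝ) : ℂ) *
        (((Real.sqrt α : ℝ):ℂ)^(N-k) * ((Real.sqrt α : ℝ):ℂ)^(n-k)) = ((α:ℝ):ℂ)^(n-k) := by
    intro k hkn hkN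
    rw [← Complex.ofReal_pow, ← Complex.ofReal_pow, ← Complex.ofReal_pow,
      ← Complex.ofReal_mul, ← Complex.ofReal_mul]
    congr 1
    rw [Real.sqrt_eq_rpow, ← Real.rpow_natCast (α ^ ((1:ℝ)/2)) (N-k),
      ← Real.rpow_natCast (α ^ ((1:ℝ)/2)) (n-k), ← Real.rpow_mul hα.le,
      ← Real.rpow_mul hα.le, ← Real.rpow_add hα, ← Real.rpow_add hα,
      ← Real.rpow_natCast α (n-k)]
    congr 1
    rw [Nat.cast_sub hkN, Nat.cast_sub hkn, hNr]
    ring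
  have hsign : ∀ k : ℕ, k ≤ N →
      ((-1:ℂ))^(N+n) * ((-1:ℂ)^n * (-1:ℂ)^(N-k)) = (-1:ℂ)^k := by
    intro k hkN
    rw [← pow_add, ← pow_add]
    exact neg_one_pow_eq _ k (n + (N-k)) (by omega)
  -- step 1
  have step1 : (-1:ℂ)^n * ∑ k ∈ Finset.range (n+1),
        ((n.choose k * N.descFactorial k : ℕ) : ℂ) * (-(α:ℂ))^(n-k) *
          z^(N-k) * (starRingEnd ℂ z)^(n-k)
      = ∑ k ∈ Finset.range (n+1), (-1:ℂ)^k *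
          ((n.choose k * N.descFactorial k : ℕ) : ℂ) * ((α:ℝ):ℂ)^(n-k) *
          z^(N-k) * (starRingEnd ℂ z)^(n-k) := by
    rw [Finset.mul_sum]
    refine Finset.sum_congr rfl fun k hk => ?_
    have hkn : k ≤ n := Nat.lt_succ_iff.mp (Finset.mem_range.mp hk)
    have hs : (-1:ℂ)^n * (-1:ℂ)^(n-k) = (-1:ℂ)^k := by
      rw [← pow_add]
      exact neg_one_pow_eq _ k (n-k) (by omega)
    rw [neg_pow ((α:ℂ)) (n-k), ← hs]
    ring
  -- step 2
  have step2 : (∑ k ∈ Finset.range (n+1), (-1:ℂ)^k *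
          ((n.choose k * N.descFactorial k : ℕ) : ℂ) * ((α:ℝ):ℂ)^(n-k) *
          z^(N-k) * (starRingEnd ℂ z)^(n-k))
      = ∑ k ∈ Finset.range (N+1), (-1:ℂ)^k *
          ((n.choose k * N.descFactorial k : ℕ) : ℂ) * ((α:ℝ):ℂ)^(n-k) *
          z^(N-k) * (starRingEnd ℂ z)^(n-k) := by
    have hv : ∀ x ∈ Finset.range (max n N + 1), x ∉ Finset.range (n+1) →
        (-1:ℂ)^x * ((n.choose x * N.descFactorial x : ℕ) : ℂ) * ((α:ℝ):ℂ)^(n-x) *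
          z^(N-x) * (starRingEnd ℂ z)^(n-x) = 0 := by
      intro x _ hx
      have hnx : n < x := by simp at hx; omega
      simp [Nat.choose_eq_zero_of_lt hnx]
    have hv2 : ∀ x ∈ Finset.range (max n N + 1), x ∉ Finset.range (N+1) →
        (-1:ℂ)^x * ((n.choose x * N.descFactorial x : ℕ) : ℂ) * ((α:ℝ):ℂ)^(n-x) *
          z^(N-x) * (starRingEnd ℂ z)^(n-x) = 0 := by
      intro x _ hx
      have hNx : N < x := by simp at hx; omega
      simp [Nat.descFactorial_eq_zero_iff_lt.mpr hNx]
    exact (Finset.sum_subset (Finset.range_subset_range.mpr (by omega)) hv).trans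
      (Finset.sum_subset (Finset.range_subset_range.mpr (by omega)) hv2).symm
  rw [step1, step2]
  -- step 3 : handle the right-hand side
  have hBB : ∑ x ∈ Finset.range (N+1),
        ((-1:ℂ)^n * ((N.choose x * n.descFactorial x : ℕ):ℂ) * (-1:ℂ)^(N-x) *
          (w^(N-x) * (starRingEnd ℂ w)^(n-x) * Complex.exp (-1 * (w * starRingEnd ℂ w))))
      = (∑ x ∈ Finset.range (N+1), (-1:ℂ)^n * ((N.choose x * n.descFactorial x : ℕ):ℂ) *
          (-1:ℂ)^(N-x) * (w^(N-x) * (starRingEnd ℂ w)^(n-x))) *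
          Complex.exp (-1 * (w * starRingEnd ℂ w)) := by
    rw [Finset.sum_mul]
    exact Finset.sum_congr rfl fun x _ => by ring
  rw [hBB]
  rw [show (((α : ℝ) ^ (((n:ℝ) - m - β)/2) : ℝ) : ℂ) *
        ((-1:ℂ)^(N+n) * Complex.exp (((1:ℝ):ℂ) * ((‖w‖ : ℝ):ℂ)^2) *
          ((∑ x ∈ Finset.range (N+1), (-1:ℂ)^n * ((N.choose x * n.descFactorial x : ℕ):ℂ) *
            (-1:ℂ)^(N-x) * (w^(N-x) * (starRingEnd ℂ w)^(n-x))) *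
            Complex.exp (-1 * (w * starRingEnd ℂ w))))
      = (Complex.exp (((1:ℝ):ℂ) * ((‖w‖ : ℝ):ℂ)^2) *
          Complex.exp ((-1:ℂ) * (w * starRingEnd ℂ w))) *
        ((((α : ℝ) ^ (((n:ℝ) - m - β)/2) : ℝ) : ℂ) *
          ((-1:ℂ)^(N+n) * ∑ x ∈ Finset.range (N+1), (-1:ℂ)^n *
            ((N.choose x * n.descFactorial x : ℕ):ℂ) * (-1:ℂ)^(N-x) *
            (w^(N-x) * (starRingEnd ℂ w)^(n-x)))) from by ring, hE1, one_mul]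
  rw [Finset.mul_sum, Finset.mul_sum]
  refine Finset.sum_congr rfl fun k hk => ?_
  have hkN : k ≤ N := Nat.lt_succ_iff.mp (Finset.mem_range.mp hk)
  rcases Nat.lt_or_ge n k with hkn | hkn
  · simp [Nat.choose_eq_zero_of_lt hkn, Nat.descFactorial_eq_zero_iff_lt.mpr hkn]
  · rw [hwdef, map_mul, Complex.conj_ofReal, mul_pow, mul_pow, hDn k,
      ← halpha k hkn hkN, ← hsign k hkN]
    ring
end

section
/- The functions ψ_{n,m}^{α,β} satisfy the raising relation -(1/α)(∂/∂z̄ - α z) ψ_{n,m}^{α,β}(z, z̄) = ψ_{n,m+1}^{α,β}(z, z̄) on ℂ*, where ∂/∂z̄ is the conjugate Wirtinger derivative. -/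
open Complex MeasureTheory Polynomial

section Aux

noncomputable def Pm (c : ℂ) : ℕ → Polynomial ℂ
  | 0 => 1
  | n+1 => Polynomial.C (c - n) * Pm c n - Polynomial.X * Pm c n
      + Polynomial.X * (Pm c n).derivative

lemma Pm_shift (c : ℂ) (n : ℕ) : Pm (c+1) n = Pm c n - (Pm c n).derivative := by
  induction n with
  | zero => simp [Pm]
  | succ n ih =>
    simp only [Pm, ih, derivative_add, derivative_sub, derivative_mul, derivative_C,
      derivative_X, C_add, C_sub, C_1]
    ring
open Complex Polynomial

noncomputable def LM (p q : ℂ) : ℂ →L[ℝ] ℂ :=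
  p • (ContinuousLinearMap.id ℝ ℂ) + q • (Complex.conjCLE.toContinuousLinearMap)

lemma LM_apply (p q h : ℂ) : LM p q h = p * h + q * (starRingEnd ℂ) h := by
  simp [LM, smul_eq_mul]

lemma wdz_LM {f : ℂ → ℂ} {p q z : ℂ} (hf : HasFDerivAt f (LM p q) z) :
    wdz f z = p := by
  rw [wdz, hf.fderiv, LM_apply, LM_apply]
  simp only [Complex.conj_I, map_one]
  ring_nf
  simp [Complex.I_sq]
  ring

lemma wdzbar_LM {f : ℂ → ℂ} {p q z : ℂ} (hf : HasFDerivAt f (LM p q) z) :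
    wdzbar f z = q := by
  rw [wdzbar, hf.fderiv, LM_apply, LM_apply]
  simp only [Complex.conj_I, map_one]
  ring_nf
  simp [Complex.I_sq]
  ring

lemma wdz_congr {f g : ℂ → ℂ} {z : ℂ} (h : f =ᶠ[nhds z] g) : wdz f z = wdz g z := by
  rw [wdz, h.fderiv_eq, ← wdz]

lemma wdzbar_congr {f g : ℂ → ℂ} {z : ℂ} (h : f =ᶠ[nhds z] g) : wdzbar f z = wdzbar g z := by
  rw [wdzbar, h.fderiv_eq, ← wdzbar]
lemma D1 {A B : ℂ → ℂ} {a b z : ℂ} (hA : HasDerivAt A a z)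
    (hB : HasDerivAt B b (z * (starRingEnd ℂ) z)) :
    HasFDerivAt (fun w => A w * B (w * (starRingEnd ℂ) w))
      (LM (a * B (z * (starRingEnd ℂ) z) + A z * b * (starRingEnd ℂ) z) (A z * b * z)) z := by
  have hconj : HasFDerivAt (fun w : ℂ => (starRingEnd ℂ) w)
      (Complex.conjCLE.toContinuousLinearMap) z :=
    Complex.conjCLE.toContinuousLinearMap.hasFDerivAt
  have h1 : HasFDerivAt (fun w : ℂ => w * (starRingEnd ℂ) w) (LM ((starRingEnd ℂ) z) z) z := by
    have h := (hasFDerivAt_id (𝕜 := ℝ) z).mul' hconj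
    refine h.congr_fderiv ?_
    apply ContinuousLinearMap.ext
    intro h
    simp [LM, smul_eq_mul]
    ring
  have h2 : HasFDerivAt (fun w : ℂ => B (w * (starRingEnd ℂ) w))
      (((1 : ℂ →L[ℂ] ℂ).smulRight b).restrictScalars ℝ |>.comp (LM ((starRingEnd ℂ) z) z)) z :=
    (hB.hasFDerivAt.restrictScalars ℝ).comp z h1
  have h3 := (hA.hasFDerivAt.restrictScalars ℝ).mul' h2
  refine h3.congr_fderiv ?_
  apply ContinuousLinearMap.ext
  intro h
  simp [LM, smul_eq_mul]
  ring

lemma iter_wdz_slit (α : ℝ) (c : ℂ) (n : ℕ) :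
    ∀ z ∈ Complex.slitPlane,
      (wdz^[n] (fun w => w ^ c * Complex.exp (-(↑α * (w * (starRingEnd ℂ) w))))) z
        = z ^ (c - n) * (Complex.exp (-(↑α * (z * (starRingEnd ℂ) z)))
            * (Pm c n).eval (↑α * (z * (starRingEnd ℂ) z))) := by
  induction n with
  | zero =>
    intro z hz
    simp [Pm]
  | succ n ih =>
    intro z hz
    rw [Function.iterate_succ_apply']
    have hz0 : z ≠ 0 := Complex.slitPlane_ne_zero hz
    set A : ℂ → ℂ := fun w => w ^ (c - (n:ℂ)) with hA_def
    set B : ℂ → ℂ := fun s => Complex.exp (-(↑α * s)) * (Pm c n).eval (↑α * s) with hB_def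
    have hev : (wdz^[n] (fun w => w ^ c * Complex.exp (-(↑α * (w * (starRingEnd ℂ) w)))))
        =ᶠ[nhds z] fun w => A w * B (w * (starRingEnd ℂ) w) := by
      filter_upwards [Complex.isOpen_slitPlane.mem_nhds hz] with w hw
      rw [ih w hw]
    rw [wdz_congr hev]
    set t : ℂ := z * (starRingEnd ℂ) z with ht_def
    have hA : HasDerivAt A ((c - n) * z ^ (c - n - 1)) z :=
      (Complex.hasStrictDerivAt_cpow_const hz).hasDerivAt
    have hexp : HasDerivAt (fun s : ℂ => Complex.exp (-(↑α * s)))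
        (Complex.exp (-(↑α * t)) * -(↑α)) t := by
      have h1 : HasDerivAt (fun s : ℂ => -(↑α * s)) (-(α:ℂ)) t := by
        exact (((hasDerivAt_id t).const_mul ((α:ℂ))).neg).congr_deriv (by ring)
      exact h1.cexp
    have heval : HasDerivAt (fun s : ℂ => (Pm c n).eval (↑α * s))
        ((Pm c n).derivative.eval (↑α * t) * ↑α) t := by
      have h1 : HasDerivAt (fun s : ℂ => (α:ℂ) * s) ((α:ℂ)) t := by
        simpa using ((hasDerivAt_id t).const_mul ((α:ℂ)))
      exact ((Pm c n).hasDerivAt (↑α * t)).comp t h1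
    have hB : HasDerivAt B
        (Complex.exp (-(↑α * t)) * -(↑α) * (Pm c n).eval (↑α * t)
          + Complex.exp (-(↑α * t)) * ((Pm c n).derivative.eval (↑α * t) * ↑α)) t :=
      hexp.mul heval
    have hF := D1 hA hB
    rw [wdz_LM hF]
    have e2 : c - (n:ℂ) - 1 = c - ((n+1 : ℕ):ℂ) := by push_cast; ring
    have e1 : c - (n:ℂ) = (c - ((n+1 : ℕ):ℂ)) + 1 := by push_cast; ring
    have hsplit : z ^ (c - (n:ℂ)) = z ^ (c - ((n+1:ℕ):ℂ)) * z := by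
      rw [e1, Complex.cpow_add _ _ hz0, Complex.cpow_one]
    simp only [hA_def, hB_def, ← ht_def, e2, hsplit]
    have hPm : (Pm c (n+1)).eval (↑α * t)
        = (c - n) * (Pm c n).eval (↑α * t) - (↑α * t) * (Pm c n).eval (↑α * t)
          + (↑α * t) * (Pm c n).derivative.eval (↑α * t) := by
      simp [Pm]
    rw [hPm, ht_def]
    ring

lemma iter_wdz_int (α : ℝ) (k : ℤ) (n : ℕ) :
    ∀ z : ℂ, z ≠ 0 →
      (wdz^[n] (fun w => w ^ k * Complex.exp (-(↑α * (w * (starRingEnd ℂ) w))))) z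
        = z ^ (k - (n:ℤ)) * (Complex.exp (-(↑α * (z * (starRingEnd ℂ) z)))
            * (Pm (k:ℂ) n).eval (↑α * (z * (starRingEnd ℂ) z))) := by
  induction n with
  | zero =>
    intro z hz
    simp [Pm]
  | succ n ih =>
    intro z hz0
    rw [Function.iterate_succ_apply']
    set A : ℂ → ℂ := fun w => w ^ (k - (n:ℤ)) with hA_def
    set B : ℂ → ℂ := fun s => Complex.exp (-(↑α * s)) * (Pm (k:ℂ) n).eval (↑α * s) with hB_def
    have hev : (wdz^[n] (fun w => w ^ k * Complex.exp (-(↑α * (w * (starRingEnd ℂ) w)))))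
        =ᶠ[nhds z] fun w => A w * B (w * (starRingEnd ℂ) w) := by
      filter_upwards [(isOpen_ne).mem_nhds (by exact hz0 : z ≠ (0:ℂ))] with w hw
      rw [ih w hw]
    rw [wdz_congr hev]
    set t : ℂ := z * (starRingEnd ℂ) z with ht_def
    have hA : HasDerivAt A (((k - (n:ℤ) : ℤ):ℂ) * z ^ (k - (n:ℤ) - 1)) z :=
      hasDerivAt_zpow _ _ (Or.inl hz0)
    have hexp : HasDerivAt (fun s : ℂ => Complex.exp (-(↑α * s)))
        (Complex.exp (-(↑α * t)) * -(↑α)) t := by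
      have h1 : HasDerivAt (fun s : ℂ => -(↑α * s)) (-(α:ℂ)) t := by
        exact (((hasDerivAt_id t).const_mul ((α:ℂ))).neg).congr_deriv (by ring)
      exact h1.cexp
    have heval : HasDerivAt (fun s : ℂ => (Pm (k:ℂ) n).eval (↑α * s))
        ((Pm (k:ℂ) n).derivative.eval (↑α * t) * ↑α) t := by
      have h1 : HasDerivAt (fun s : ℂ => (α:ℂ) * s) ((α:ℂ)) t := by
        simpa using ((hasDerivAt_id t).const_mul ((α:ℂ)))
      exact ((Pm (k:ℂ) n).hasDerivAt (↑α * t)).comp t h1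
    have hB : HasDerivAt B
        (Complex.exp (-(↑α * t)) * -(↑α) * (Pm (k:ℂ) n).eval (↑α * t)
          + Complex.exp (-(↑α * t)) * ((Pm (k:ℂ) n).derivative.eval (↑α * t) * ↑α)) t :=
      hexp.mul heval
    have hF := D1 hA hB
    rw [wdz_LM hF]
    have e2 : k - (n:ℤ) - 1 = k - ((n+1 : ℕ):ℤ) := by push_cast; ring
    have e1 : k - (n:ℤ) = (k - ((n+1 : ℕ):ℤ)) + 1 := by push_cast; ring
    have hsplit : z ^ (k - (n:ℤ)) = z ^ (k - ((n+1:ℕ):ℤ)) * z := by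
      rw [e1, zpow_add₀ hz0, zpow_one]
    have ecast : ((k - (n:ℤ) : ℤ):ℂ) = (k:ℂ) - (n:ℂ) := by push_cast; ring
    simp only [hA_def, hB_def, ← ht_def, e2, hsplit, ecast]
    have hPm : (Pm (k:ℂ) (n+1)).eval (↑α * t)
        = ((k:ℂ) - n) * (Pm (k:ℂ) n).eval (↑α * t) - (↑α * t) * (Pm (k:ℂ) n).eval (↑α * t)
          + (↑α * t) * (Pm (k:ℂ) n).derivative.eval (↑α * t) := by
      simp [Pm]
    rw [hPm, ht_def]
    ring

lemma habs (α : ℝ) (w : ℂ) : ((α:ℂ) * (‖w‖:ℂ) ^ 2) = ↑α * (w * (starRingEnd ℂ) w) := by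
  rw [Complex.mul_conj, ← Complex.ofReal_pow, Complex.sq_norm]

lemma inner_eq (α : ℝ) (c : ℂ) :
    (fun w : ℂ => w ^ c * Complex.exp (-((α:ℂ) * (‖w‖:ℂ) ^ 2)))
      = fun w => w ^ c * Complex.exp (-(↑α * (w * (starRingEnd ℂ) w))) := by
  funext w
  rw [habs]

lemma psi_slit (α β : ℝ) (n : ℕ) (m : ℤ) (z : ℂ) (hz : z ∈ Complex.slitPlane) :
    psi α β n m z = (-1 : ℂ)^n * (z ^ ((m:ℂ) - n)
      * (Pm ((β:ℂ) + m) n).eval (↑α * (z * (starRingEnd ℂ) z))) := by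
  have hz0 : z ≠ 0 := Complex.slitPlane_ne_zero hz
  rw [psi, inner_eq α ((β:ℂ) + m), iter_wdz_slit α ((β:ℂ)+m) n z hz, habs α z]
  have h1 : z ^ (-(β:ℂ)) * z ^ (((β:ℂ)+m) - n) = z ^ ((m:ℂ) - n) := by
    rw [← Complex.cpow_add _ _ hz0]
    congr 1
    ring
  have key : ∀ v : ℂ, (-1:ℂ)^n * z ^ (-(β:ℂ)) * Complex.exp (↑α * (z * (starRingEnd ℂ) z))
      * (z ^ (((β:ℂ)+m) - n) * (Complex.exp (-(↑α * (z * (starRingEnd ℂ) z))) * v))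
      = (-1:ℂ)^n * ((z ^ (-(β:ℂ)) * z ^ (((β:ℂ)+m) - n))
        * ((Complex.exp (↑α * (z * (starRingEnd ℂ) z))
            * Complex.exp (-(↑α * (z * (starRingEnd ℂ) z)))) * v)) := by
    intro v; ring
  rw [key, h1, ← Complex.exp_add, add_neg_cancel, Complex.exp_zero, one_mul]

lemma psi_int (α β : ℝ) (k : ℤ) (hβ : (β:ℝ) = (k:ℝ)) (n : ℕ) (m : ℤ) (z : ℂ) (hz0 : z ≠ 0) :
    psi α β n m z = (-1 : ℂ)^n * (z ^ (m - (n:ℤ))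
      * (Pm ((β:ℂ) + m) n).eval (↑α * (z * (starRingEnd ℂ) z))) := by
  have hβc : (β:ℂ) = (k:ℂ) := by
    rw [show (β:ℂ) = ((β:ℝ):ℂ) from rfl, hβ]; push_cast; ring
  have hinner : (fun w : ℂ => w ^ ((β:ℂ) + (m:ℂ)) * Complex.exp (-((α:ℂ) * (‖w‖:ℂ) ^ 2)))
      = fun w => w ^ (k + m : ℤ) * Complex.exp (-(↑α * (w * (starRingEnd ℂ) w))) := by
    funext w
    rw [habs, hβc, show ((k:ℂ) + (m:ℂ)) = ((k + m : ℤ) : ℂ) by push_cast; ring,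
      Complex.cpow_intCast]
  rw [psi, hinner, iter_wdz_int α (k+m) n z hz0, habs α z]
  have h1 : z ^ (-(β:ℂ)) * z ^ (k + m - (n:ℤ)) = z ^ (m - (n:ℤ)) := by
    rw [hβc, show (-(k:ℂ)) = ((-k : ℤ) : ℂ) by push_cast; ring, Complex.cpow_intCast,
      ← zpow_add₀ hz0]
    congr 1
    ring
  have hPmi : ((k + m : ℤ) : ℂ) = (β:ℂ) + m := by rw [hβc]; push_cast; ring
  rw [hPmi]
  have key : ∀ v : ℂ, (-1:ℂ)^n * z ^ (-(β:ℂ)) * Complex.exp (↑α * (z * (starRingEnd ℂ) z))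
      * (z ^ (k + m - (n:ℤ)) * (Complex.exp (-(↑α * (z * (starRingEnd ℂ) z))) * v))
      = (-1:ℂ)^n * ((z ^ (-(β:ℂ)) * z ^ (k + m - (n:ℤ)))
        * ((Complex.exp (↑α * (z * (starRingEnd ℂ) z))
            * Complex.exp (-(↑α * (z * (starRingEnd ℂ) z)))) * v)) := by
    intro v; ring
  rw [key, h1, ← Complex.exp_add, add_neg_cancel, Complex.exp_zero, one_mul]

lemma stmt_slit (α β : ℝ) (hα : 0 < α) (n : ℕ) (m : ℤ) (z : ℂ) (hz : z ∈ Complex.slitPlane) :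
    -(1/(α:ℂ)) * (wdzbar (psi α β n m) z - (α:ℂ) * z * psi α β n m z) =
      psi α β n (m+1) z := by
  have hz0 : z ≠ 0 := Complex.slitPlane_ne_zero hz
  have hα0 : (α:ℂ) ≠ 0 := by exact_mod_cast hα.ne'
  set c : ℂ := (β:ℂ) + m with hc_def
  set t : ℂ := z * (starRingEnd ℂ) z with ht_def
  have hev : psi α β n m =ᶠ[nhds z]
      fun w => ((-1:ℂ)^n * w ^ ((m:ℂ) - n))
        * (Pm c n).eval ((α:ℂ) * (w * (starRingEnd ℂ) w)) := by
    filter_upwards [Complex.isOpen_slitPlane.mem_nhds hz] with w hw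
    rw [psi_slit α β n m w hw]
    ring
  rw [wdzbar_congr hev]
  have hA : HasDerivAt (fun w : ℂ => (-1:ℂ)^n * w ^ ((m:ℂ) - n))
      ((-1:ℂ)^n * (((m:ℂ) - n) * z ^ ((m:ℂ) - n - 1))) z :=
    ((Complex.hasStrictDerivAt_cpow_const hz).hasDerivAt).const_mul _
  have heval : HasDerivAt (fun s : ℂ => (Pm c n).eval (↑α * s))
      ((Pm c n).derivative.eval (↑α * t) * ↑α) t := by
    have h1 : HasDerivAt (fun s : ℂ => (α:ℂ) * s) ((α:ℂ)) t := by
      simpa using ((hasDerivAt_id t).const_mul ((α:ℂ)))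
    exact ((Pm c n).hasDerivAt (↑α * t)).comp t h1
  have hF := D1 (B := fun s => (Pm c n).eval ((α:ℂ) * s)) hA heval
  rw [wdzbar_LM hF]
  rw [psi_slit α β n m z hz, psi_slit α β n (m+1) z hz]
  have hshift : Pm ((β:ℂ) + ((m+1:ℤ):ℂ)) n = Pm c n - (Pm c n).derivative := by
    rw [show ((β:ℂ) + ((m+1:ℤ):ℂ)) = c + 1 by rw [hc_def]; push_cast; ring]
    exact Pm_shift c n
  rw [hshift, Polynomial.eval_sub]
  have hpow : z ^ (((m+1:ℤ):ℂ) - n) = z ^ ((m:ℂ) - n) * z := by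
    rw [show (((m+1:ℤ):ℂ) - (n:ℂ)) = ((m:ℂ) - n) + 1 by push_cast; ring,
      Complex.cpow_add _ _ hz0, Complex.cpow_one]
  rw [hpow, ← ht_def]
  field_simp
  ring

lemma stmt_int (α β : ℝ) (hα : 0 < α) (k : ℤ) (hβ : (β:ℝ) = (k:ℝ)) (n : ℕ) (m : ℤ) (z : ℂ)
    (hz0 : z ≠ 0) :
    -(1/(α:ℂ)) * (wdzbar (psi α β n m) z - (α:ℂ) * z * psi α β n m z) =
      psi α β n (m+1) z := by
  have hα0 : (α:ℂ) ≠ 0 := by exact_mod_cast hα.ne'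
  set c : ℂ := (β:ℂ) + m with hc_def
  set t : ℂ := z * (starRingEnd ℂ) z with ht_def
  have hev : psi α β n m =ᶠ[nhds z]
      fun w => ((-1:ℂ)^n * w ^ (m - (n:ℤ)))
        * (Pm c n).eval ((α:ℂ) * (w * (starRingEnd ℂ) w)) := by
    filter_upwards [(isOpen_ne).mem_nhds (by exact hz0 : z ≠ (0:ℂ))] with w hw
    rw [psi_int α β k hβ n m w hw]
    ring
  rw [wdzbar_congr hev]
  have hA : HasDerivAt (fun w : ℂ => (-1:ℂ)^n * w ^ (m - (n:ℤ)))
      ((-1:ℂ)^n * (((m - (n:ℤ) : ℤ):ℂ) * z ^ (m - (n:ℤ) - 1))) z :=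
    (hasDerivAt_zpow _ _ (Or.inl hz0)).const_mul _
  have heval : HasDerivAt (fun s : ℂ => (Pm c n).eval (↑α * s))
      ((Pm c n).derivative.eval (↑α * t) * ↑α) t := by
    have h1 : HasDerivAt (fun s : ℂ => (α:ℂ) * s) ((α:ℂ)) t := by
      simpa using ((hasDerivAt_id t).const_mul ((α:ℂ)))
    exact ((Pm c n).hasDerivAt (↑α * t)).comp t h1
  have hF := D1 (B := fun s => (Pm c n).eval ((α:ℂ) * s)) hA heval
  rw [wdzbar_LM hF]
  rw [psi_int α β k hβ n m z hz0, psi_int α β k hβ n (m+1) z hz0]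
  have hshift : Pm ((β:ℂ) + ((m+1:ℤ):ℂ)) n = Pm c n - (Pm c n).derivative := by
    rw [show ((β:ℂ) + ((m+1:ℤ):ℂ)) = c + 1 by rw [hc_def]; push_cast; ring]
    exact Pm_shift c n
  rw [hshift, Polynomial.eval_sub]
  have hpow : z ^ (m + 1 - (n:ℤ)) = z ^ (m - (n:ℤ)) * z := by
    rw [show m + 1 - (n:ℤ) = (m - (n:ℤ)) + 1 by ring, zpow_add₀ hz0, zpow_one]
  rw [hpow, ← ht_def]
  field_simp
  ring

open Filter Asymptotics in
lemma inv_nat_tendsto : Tendsto (fun k : ℕ => ((k:ℂ))⁻¹) atTop (nhds 0) := by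
  have h1 : Tendsto (fun k : ℕ => ((k:ℝ))⁻¹) atTop (nhds 0) :=
    tendsto_inv_atTop_zero.comp tendsto_natCast_atTop_atTop
  have h2 := (Complex.continuous_ofReal.tendsto 0).comp h1
  simpa [Function.comp_def, Complex.ofReal_inv] using h2

open Filter Asymptotics in
lemma seq_deriv {h : ℂ → ℂ} {L : ℂ →L[ℝ] ℂ} {z' : ℂ} (hf : HasFDerivAt h L z')
    (v : ℕ → ℂ) (d : ℂ) (hv : Tendsto (fun k : ℕ => (k:ℂ) * (v k - z')) atTop (nhds d)) :
    Tendsto (fun k : ℕ => (k:ℂ) * (h (v k) - h z')) atTop (nhds (L d)) := by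
  have hv0 : Tendsto (fun k : ℕ => v k - z') atTop (nhds 0) := by
    have heq : (fun k : ℕ => ((k:ℂ))⁻¹ * ((k:ℂ) * (v k - z'))) =ᶠ[atTop] (fun k : ℕ => v k - z') := by
      filter_upwards [eventually_ge_atTop 1] with k hk
      have : ((k:ℂ)) ≠ 0 := by
        simpa using (Nat.one_le_iff_ne_zero.mp hk)
      field_simp
    have := inv_nat_tendsto.mul hv
    rw [zero_mul] at this
    exact Tendsto.congr' heq this
  have hvz : Tendsto v atTop (nhds z') := by
    have := hv0.add (tendsto_const_nhds (x := z'))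
    simpa using this
  have ho : (fun k : ℕ => h (v k) - h z' - L (v k - z')) =o[atTop] fun k : ℕ => v k - z' :=
    hf.isLittleO.comp_tendsto hvz
  have hkv : (fun k : ℕ => (k:ℂ) * (v k - z')) =O[atTop] (fun _ => (1:ℝ)) := hv.isBigO_one ℝ
  have key : (fun k : ℕ => (k:ℂ) * (h (v k) - h z' - L (v k - z'))) =o[atTop]
      (fun _ => (1:ℝ)) :=
    (((isBigO_refl (fun k : ℕ => (k:ℂ)) atTop).mul_isLittleO ho).trans_isBigO hkv)
  have t1 : Tendsto (fun k : ℕ => (k:ℂ) * (h (v k) - h z' - L (v k - z'))) atTop (nhds 0) :=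
    (Asymptotics.isLittleO_one_iff ℝ).mp key
  have t2 : Tendsto (fun k : ℕ => L ((k:ℂ) * (v k - z'))) atTop (nhds (L d)) :=
    (L.continuous.tendsto d).comp hv
  have heq : ∀ k : ℕ, (k:ℂ) * (h (v k) - h z')
      = (k:ℂ) * (h (v k) - h z' - L (v k - z')) + L ((k:ℂ) * (v k - z')) := by
    intro k
    have hs : ((k:ℂ)) * (v k - z') = (k:ℝ) • (v k - z') := by
      rw [Complex.real_smul]; push_cast; ring
    rw [hs, L.map_smul, Complex.real_smul]
    push_cast
    ring
  have := t1.add t2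
  rw [zero_add] at this
  exact this.congr (fun k => (heq k).symm)

open Filter Asymptotics Topology in
lemma upper_neBot {z' : ℂ} (him : z'.im = 0) : (nhdsWithin z' {w : ℂ | 0 < w.im}).NeBot := by
  rw [← mem_closure_iff_nhdsWithin_neBot]
  have he : Tendsto (fun k : ℕ => ((k:ℝ)+1)⁻¹) atTop (nhds 0) := by
    have : Tendsto (fun k : ℕ => ((k:ℝ)+1)) atTop atTop :=
      tendsto_atTop_add_const_right _ 1 tendsto_natCast_atTop_atTop
    exact tendsto_inv_atTop_zero.comp this
  have ht : Tendsto (fun k : ℕ => z' + Complex.I * ((((k:ℝ)+1)⁻¹ : ℝ) : ℂ)) atTop (nhds z') := by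
    have h2 := ((Complex.continuous_ofReal.tendsto 0).comp he).const_mul Complex.I
    have := tendsto_const_nhds (x := z') (f := atTop (α := ℕ)) |>.add h2
    simpa using this
  refine mem_closure_of_tendsto ht ?_
  filter_upwards with k
  simp only [Set.mem_setOf_eq, Complex.add_im, Complex.mul_im, Complex.I_re, Complex.I_im,
    Complex.ofReal_re, Complex.ofReal_im, him]
  positivity

open Filter Asymptotics Topology in
lemma axis_fderiv_zero {h u : ℂ → ℂ} {Q : ℝ → ℂ} {q Lu : ℂ} {M : ℝ} {z' : ℂ}
    (hre : z'.re < 0) (him : z'.im = 0)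
    (h0 : ∀ᶠ w in nhds z', w.im = 0 → h w = 0)
    (h1 : ∀ᶠ w in nhds z', w.im ≠ 0 → h w = u w * Q (Complex.normSq w))
    (hu : Tendsto u (nhdsWithin z' {w : ℂ | 0 < w.im}) (nhds Lu)) (hLu : Lu ≠ 0)
    (hM : ∀ᶠ w in nhds z', ‖u w‖ ≤ M)
    (hQ : HasDerivAt Q q (Complex.normSq z')) :
    fderiv ℝ h z' = 0 := by
  have hval : h z' = 0 := h0.self_of_nhds him
  have hne : (nhdsWithin z' {w : ℂ | 0 < w.im}).NeBot := upper_neBot him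
  by_cases hp : Q (Complex.normSq z') = 0
  · by_cases hq : q = 0
    · -- differentiable with derivative zero
      have hns : HasFDerivAt Complex.normSq
          ((2*z'.re) • Complex.reCLM + (2*z'.im) • Complex.imCLM) z' := by
        have h1 := ((Complex.reCLM.hasFDerivAt (x := z')).mul
            (Complex.reCLM.hasFDerivAt (x := z'))).add
          ((Complex.imCLM.hasFDerivAt (x := z')).mul (Complex.imCLM.hasFDerivAt (x := z')))
        have heq : (⇑Complex.reCLM * ⇑Complex.reCLM + ⇑Complex.imCLM * ⇑Complex.imCLM : ℂ → ℝ)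
            = Complex.normSq := by
          funext w
          simp [Complex.normSq_apply]
        rw [heq] at h1
        refine h1.congr_fderiv ?_
        apply ContinuousLinearMap.ext
        intro w
        simp [smul_eq_mul]
        ring
      have hQf : HasFDerivAt Q (0 : ℝ →L[ℝ] ℂ) (Complex.normSq z') := by
        have h7 := hQ.hasFDerivAt
        refine h7.congr_fderiv ?_
        apply ContinuousLinearMap.ext
        intro s
        simp [hq]
      have hQn : HasFDerivAt (fun w : ℂ => Q (Complex.normSq w))
          ((0 : ℝ →L[ℝ] ℂ).comp ((2*z'.re) • Complex.reCLM + (2*z'.im) • Complex.imCLM)) z' :=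
        hQf.comp z' hns
      rw [ContinuousLinearMap.zero_comp] at hQn
      have hlo : (fun w : ℂ => Q (Complex.normSq w)) =o[nhds z'] fun w => w - z' := by
        have h2 := hQn.isLittleO
        simpa [hp] using h2
      have hM0 : 0 ≤ M := le_trans (norm_nonneg _) hM.self_of_nhds
      have hOb : h =O[nhds z'] fun w => Q (Complex.normSq w) := by
        apply IsBigO.of_bound M
        filter_upwards [h0, h1, hM] with w hw0 hw1 hwM
        by_cases hwi : w.im = 0
        · rw [hw0 hwi]
          simp only [norm_zero]
          positivity
        · rw [hw1 hwi, norm_mul]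
          have : ‖u w‖ ≤ M := hwM
          exact mul_le_mul_of_nonneg_right this (norm_nonneg _)
      have hfinal : HasFDerivAt h (0 : ℂ →L[ℝ] ℂ) z' := by
        rw [hasFDerivAt_iff_isLittleO]
        have h9 := hOb.trans_isLittleO hlo
        simpa [hval] using h9
      rw [hfinal.fderiv]
    · -- p = 0, q ≠ 0 : not differentiable
      have hnd : ¬ DifferentiableAt ℝ h z' := by
        intro hd
        have hL := hd.hasFDerivAt
        set L := fderiv ℝ h z' with hLdef
        set e : ℕ → ℝ := fun k => ((k:ℝ))⁻¹ with hedef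
        have he : Tendsto e atTop (nhds 0) :=
          tendsto_inv_atTop_zero.comp tendsto_natCast_atTop_atTop
        have hepos : ∀ᶠ k : ℕ in atTop, 0 < e k := by
          filter_upwards [eventually_ge_atTop 1] with k hk
          have : (0:ℝ) < (k:ℝ) := by exact_mod_cast hk
          positivity
        have hkne : ∀ᶠ k : ℕ in atTop, ((k:ℝ)) ≠ 0 := by
          filter_upwards [hepos] with k hk
          intro hk0
          rw [hedef] at hk
          simp [hk0] at hk
        -- L 1 = 0 via the real-axis sequence
        have hx : Tendsto (fun k : ℕ => (k:ℂ) * ((z' + ((e k : ℝ) : ℂ)) - z')) atTop (nhds 1) := by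
          apply Tendsto.congr' _ (tendsto_const_nhds (x := (1:ℂ)))
          filter_upwards [hkne] with k hk
          have : ((k:ℝ)) * e k = 1 := by
            rw [hedef]; field_simp
          rw [add_sub_cancel_left]
          calc (1:ℂ) = (((k:ℝ) * e k : ℝ) : ℂ) := by rw [this]; norm_num
          _ = (k:ℂ) * ((e k : ℝ) : ℂ) := by push_cast; ring
        have hxz : Tendsto (fun k : ℕ => z' + ((e k : ℝ) : ℂ)) atTop (nhds z') := by
          have h2 := (Complex.continuous_ofReal.tendsto 0).comp he
          have := tendsto_const_nhds (x := z') (f := atTop (α := ℕ)) |>.add h2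
          simpa using this
        have h10 := seq_deriv hL (fun k : ℕ => z' + ((e k : ℝ) : ℂ)) 1 hx
        have hx0 : ∀ᶠ k : ℕ in atTop, h (z' + ((e k : ℝ) : ℂ)) = 0 := by
          filter_upwards [hxz.eventually h0] with k hk
          exact hk (by simp [him])
        have hL1 : L 1 = 0 := by
          refine tendsto_nhds_unique h10 ?_
          apply Tendsto.congr' _ (tendsto_const_nhds (x := (0:ℂ)))
          filter_upwards [hx0] with k hk
          rw [hk, hval]
          ring
        -- the contradiction sequence
        set v : ℕ → ℂ := fun k => z' + (-1 + Complex.I * ((e k : ℝ):ℂ)) * ((e k : ℝ):ℂ)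
          with hvdef
        have hvsub : ∀ k, v k - z' = (-1 + Complex.I * ((e k : ℝ):ℂ)) * ((e k : ℝ):ℂ) := by
          intro k; rw [hvdef]; ring
        have hvk : Tendsto (fun k : ℕ => (k:ℂ) * (v k - z')) atTop (nhds (-1)) := by
          have hlim : Tendsto (fun k : ℕ => -1 + Complex.I * ((e k : ℝ):ℂ)) atTop (nhds (-1)) := by
            have h2 := ((Complex.continuous_ofReal.tendsto 0).comp he).const_mul Complex.I
            have := tendsto_const_nhds (x := (-1:ℂ)) (f := atTop (α := ℕ)) |>.add h2
            simpa using this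
          apply Tendsto.congr' _ hlim
          filter_upwards [hkne] with k hk
          have hke : ((k:ℝ)) * e k = 1 := by rw [hedef]; field_simp
          rw [hvsub]
          have : (k:ℂ) * ((e k : ℝ):ℂ) = 1 := by
            calc (k:ℂ) * ((e k : ℝ):ℂ) = (((k:ℝ) * e k : ℝ) : ℂ) := by push_cast; ring
            _ = 1 := by rw [hke]; norm_num
          calc -1 + Complex.I * ((e k : ℝ):ℂ)
              = (-1 + Complex.I * ((e k : ℝ):ℂ)) * ((k:ℂ) * ((e k : ℝ):ℂ)) := by
                rw [this]; ring
            _ = (k:ℂ) * ((-1 + Complex.I * ((e k : ℝ):ℂ)) * ((e k : ℝ):ℂ)) := by ring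
        have hvz : Tendsto v atTop (nhds z') := by
          have : Tendsto (fun k : ℕ => (-1 + Complex.I * ((e k : ℝ):ℂ)) * ((e k : ℝ):ℂ))
              atTop (nhds 0) := by
            have h2 := (Complex.continuous_ofReal.tendsto 0).comp he
            have hlim : Tendsto (fun k : ℕ => -1 + Complex.I * ((e k : ℝ):ℂ)) atTop
                (nhds (-1)) := by
              have h3 := h2.const_mul Complex.I
              have := tendsto_const_nhds (x := (-1:ℂ)) (f := atTop (α := ℕ)) |>.add h3
              simpa using this
            have := hlim.mul h2
            simpa using this
          have h4 := tendsto_const_nhds (x := z') (f := atTop (α := ℕ)) |>.add this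
          rw [add_zero] at h4
          exact h4.congr (fun k => by rw [hvdef])
        have hvre : ∀ k, (v k).re = z'.re - e k := by
          intro k; simp [hvdef, him]; ring
        have hvim : ∀ k, (v k).im = e k * e k := by
          intro k; simp [hvdef, him]
        have hvupper : Tendsto v atTop (nhdsWithin z' {w : ℂ | 0 < w.im}) := by
          rw [tendsto_nhdsWithin_iff]
          refine ⟨hvz, ?_⟩
          filter_upwards [hepos] with k hk
          simp only [Set.mem_setOf_eq, hvim k]
          positivity
        have hnseq : ∀ k, Complex.normSq (v k) - (Complex.normSq z')
            = e k * (-2*z'.re + e k + e k^3) := by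
          intro k
          rw [Complex.normSq_apply, Complex.normSq_apply, hvre, hvim, him]
          ring
        have hnne : ∀ᶠ k : ℕ in atTop, Complex.normSq (v k) ≠ (Complex.normSq z') := by
          filter_upwards [hepos] with k hk
          intro hcon
          have h5 := hnseq k
          rw [hcon, sub_self] at h5
          have hpos : 0 < e k * (-2*z'.re + e k + e k^3) := by
            have : 0 < -2*z'.re := by linarith
            have h6 : 0 < -2*z'.re + e k + e k^3 := by positivity
            positivity
          rw [← h5] at hpos
          exact lt_irrefl 0 hpos
        have hntend : Tendsto (fun k => Complex.normSq (v k)) atTop (nhds (Complex.normSq z')) :=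
          (Complex.continuous_normSq.tendsto z').comp hvz
        have hslope : Tendsto (fun k => slope Q (Complex.normSq z') (Complex.normSq (v k))) atTop (nhds q) := by
          have hQ' := hasDerivAt_iff_tendsto_slope.mp hQ
          exact hQ'.comp (tendsto_nhdsWithin_iff.mpr ⟨hntend, hnne⟩)
        have hke2 : Tendsto (fun k : ℕ => ((k:ℝ) * (Complex.normSq (v k) - (Complex.normSq z')))) atTop
            (nhds (-2*z'.re)) := by
          have hlim : Tendsto (fun k : ℕ => -2*z'.re + e k + e k^3) atTop (nhds (-2*z'.re)) := by
            have h6 := (tendsto_const_nhds (x := (-2*z'.re)) (f := atTop (α := ℕ))).add he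
            have h7 := h6.add (he.pow 3)
            simpa using h7
          apply Tendsto.congr' _ hlim
          filter_upwards [hkne] with k hk
          rw [hnseq k]
          have hke : ((k:ℝ)) * e k = 1 := by rw [hedef]; field_simp
          calc -2*z'.re + e k + e k^3
              = ((k:ℝ) * e k) * (-2*z'.re + e k + e k^3) := by rw [hke]; ring
            _ = (k:ℝ) * (e k * (-2*z'.re + e k + e k^3)) := by ring
        have hdirect : Tendsto (fun k : ℕ => (k:ℂ) * h (v k)) atTop
            (nhds (Lu * (((-2*z'.re : ℝ) : ℂ) * q))) := by
          have hulim : Tendsto (fun k => u (v k)) atTop (nhds Lu) := hu.comp hvupper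
          have hcast : Tendsto (fun k : ℕ => (((k:ℝ) * (Complex.normSq (v k) - (Complex.normSq z')) : ℝ) : ℂ))
              atTop (nhds ((-2*z'.re : ℝ) : ℂ)) :=
            (Complex.continuous_ofReal.tendsto _).comp hke2
          have hprod := hulim.mul (hcast.mul hslope)
          apply Tendsto.congr' _ hprod
          filter_upwards [hvz.eventually h1, hnne, hepos] with k hk1 hkn hkp
          have him' : (v k).im ≠ 0 := by
            rw [hvim k]
            positivity
          have hsne : (Complex.normSq (v k) - Complex.normSq z') ≠ 0 := sub_ne_zero.mpr hkn
          rw [hk1 him', slope_def_module, hp, sub_zero]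
          rw [Complex.real_smul]
          have hsneC : ((Complex.normSq (v k) : ℝ) : ℂ) - ((Complex.normSq z' : ℝ) : ℂ) ≠ 0 := by
            rw [← Complex.ofReal_sub]
            exact_mod_cast sub_ne_zero.mpr hkn
          push_cast
          field_simp [hsneC]
        have hseq2 := seq_deriv hL v (-1) hvk
        have hseq3 : Tendsto (fun k : ℕ => (k:ℂ) * h (v k)) atTop (nhds (L (-1))) :=
          hseq2.congr (fun k => by rw [hval, sub_zero])
        have hLm1 : L (-1) = 0 := by
          have h8 : (-1 : ℂ) = -(1:ℂ) := by norm_num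
          rw [h8, map_neg, hL1, neg_zero]
        rw [hLm1] at hseq3
        have huniq := tendsto_nhds_unique hdirect hseq3
        have hne2 : Lu * (((-2*z'.re : ℝ) : ℂ) * q) ≠ 0 := by
          apply mul_ne_zero hLu
          apply mul_ne_zero _ hq
          simp only [ne_eq, Complex.ofReal_eq_zero]
          intro hcon
          · linarith [hcon]
        exact hne2 huniq
      rw [fderiv_zero_of_not_differentiableAt hnd]
  · -- p ≠ 0 : not even continuous
    have hnd : ¬ DifferentiableAt ℝ h z' := by
      intro hd
      have hcont : Tendsto h (nhdsWithin z' {w : ℂ | 0 < w.im}) (nhds 0) := by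
        rw [← hval]
        exact (hd.continuousAt.continuousWithinAt (s := {w : ℂ | 0 < w.im})).tendsto
      have hQcont : ContinuousAt (fun w : ℂ => Q (Complex.normSq w)) z' :=
        (hQ.continuousAt).comp (Complex.continuous_normSq.continuousAt)
      have hTlim : Tendsto (fun w => u w * Q (Complex.normSq w))
          (nhdsWithin z' {w : ℂ | 0 < w.im}) (nhds (Lu * Q (Complex.normSq z'))) :=
        hu.mul (hQcont.continuousWithinAt).tendsto
      have heq : h =ᶠ[nhdsWithin z' {w : ℂ | 0 < w.im}] fun w => u w * Q (Complex.normSq w) := by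
        filter_upwards [h1.filter_mono nhdsWithin_le_nhds, self_mem_nhdsWithin] with w hw hwu
        exact hw (ne_of_gt hwu)
      have huniq := tendsto_nhds_unique (hTlim.congr' heq.symm) hcont
      exact (mul_ne_zero hLu hp) huniq
    rw [fderiv_zero_of_not_differentiableAt hnd]

open Filter Asymptotics Topology in
lemma lower_neBot {z' : ℂ} (him : z'.im = 0) : (nhdsWithin z' {w : ℂ | w.im < 0}).NeBot := by
  rw [← mem_closure_iff_nhdsWithin_neBot]
  have he : Tendsto (fun k : ℕ => ((k:ℝ)+1)⁻¹) atTop (nhds 0) := by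
    have : Tendsto (fun k : ℕ => ((k:ℝ)+1)) atTop atTop :=
      tendsto_atTop_add_const_right _ 1 tendsto_natCast_atTop_atTop
    exact tendsto_inv_atTop_zero.comp this
  have ht : Tendsto (fun k : ℕ => z' - Complex.I * ((((k:ℝ)+1)⁻¹ : ℝ) : ℂ)) atTop (nhds z') := by
    have h2 := ((Complex.continuous_ofReal.tendsto 0).comp he).const_mul Complex.I
    have := tendsto_const_nhds (x := z') (f := atTop (α := ℕ)) |>.sub h2
    simpa using this
  refine mem_closure_of_tendsto ht ?_
  filter_upwards with k
  simp only [Set.mem_setOf_eq, Complex.sub_im, Complex.mul_im, Complex.I_re, Complex.I_im,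
    Complex.ofReal_re, Complex.ofReal_im, him]
  have : (0:ℝ) < ((k:ℝ)+1)⁻¹ := by positivity
  simp only [zero_mul, one_mul, add_zero, zero_sub, mul_zero, zero_add]
  linarith

open Filter Asymptotics Topology in
lemma wdz_base_axis (α : ℝ) (c : ℂ) (hc : ∀ k : ℤ, c ≠ (k:ℂ)) (z' : ℂ)
    (hre : z'.re < 0) (him : z'.im = 0) :
    fderiv ℝ (fun w : ℂ => w ^ c * Complex.exp (-(↑α * (w * (starRingEnd ℂ) w)))) z' = 0 := by
  have hz0 : z' ≠ 0 := by
    intro hcon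
    rw [hcon] at hre
    simp at hre
  have hne : (nhdsWithin z' {w : ℂ | w.im < 0}).NeBot := lower_neBot him
  apply fderiv_zero_of_not_differentiableAt
  intro hd
  set E : ℂ → ℂ := fun w => Complex.exp (-(↑α * (w * (starRingEnd ℂ) w))) with hEdef
  have hEcont : Continuous E := by
    apply Complex.continuous_exp.comp
    exact (continuous_const.mul (continuous_id.mul Complex.continuous_conj)).neg
  have hcont : Tendsto (fun w : ℂ => w ^ c * E w) (nhdsWithin z' {w : ℂ | w.im < 0})
      (nhds (z' ^ c * E z')) :=
    (hd.continuousAt.continuousWithinAt (s := {w : ℂ | w.im < 0})).tendsto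
  have hlog := Complex.tendsto_log_nhdsWithin_im_neg_of_re_neg_of_im_zero hre him
  have hcpow : Tendsto (fun w : ℂ => w ^ c) (nhdsWithin z' {w : ℂ | w.im < 0})
      (nhds (Complex.exp ((Real.log (‖z'‖) - Real.pi * Complex.I) * c))) := by
    have h2 : Tendsto (fun w : ℂ => Complex.exp (Complex.log w * c))
        (nhdsWithin z' {w : ℂ | w.im < 0})
        (nhds (Complex.exp ((Real.log (‖z'‖) - Real.pi * Complex.I) * c))) :=
      (Complex.continuous_exp.tendsto _).comp (hlog.mul_const c)
    apply h2.congr'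
    filter_upwards [self_mem_nhdsWithin] with w hw
    have hw0 : w ≠ 0 := by
      intro hcon
      rw [hcon] at hw
      simp [Set.mem_setOf_eq] at hw
    rw [Complex.cpow_def_of_ne_zero hw0]
  have hflim : Tendsto (fun w : ℂ => w ^ c * E w) (nhdsWithin z' {w : ℂ | w.im < 0})
      (nhds (Complex.exp ((Real.log (‖z'‖) - Real.pi * Complex.I) * c) * E z')) :=
    hcpow.mul ((hEcont.continuousAt.continuousWithinAt).tendsto)
  have huniq := tendsto_nhds_unique hcont hflim
  have hfz : z' ^ c = Complex.exp ((Real.log (‖z'‖) + Real.pi * Complex.I) * c) := by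
    rw [Complex.cpow_def_of_ne_zero hz0]
    congr 1
    rw [Complex.log, Complex.arg_eq_pi_iff.mpr ⟨hre, him⟩]
  rw [hfz] at huniq
  have hEne : E z' ≠ 0 := Complex.exp_ne_zero _
  have hexps := mul_right_cancel₀ hEne huniq
  have hone : Complex.exp ((Real.log (‖z'‖) + Real.pi * Complex.I) * c
      - (Real.log (‖z'‖) - Real.pi * Complex.I) * c) = 1 := by
    rw [Complex.exp_sub, hexps, div_self (Complex.exp_ne_zero _)]
  have harg : (Real.log (‖z'‖) + Real.pi * Complex.I) * c
      - (Real.log (‖z'‖) - Real.pi * Complex.I) * c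
      = c * (2 * Real.pi * Complex.I) := by ring
  rw [harg, Complex.exp_eq_one_iff] at hone
  obtain ⟨k, hk⟩ := hone
  have h2pi : (2 * (Real.pi:ℂ) * Complex.I) ≠ 0 := by
    simp [Real.pi_ne_zero, Complex.I_ne_zero]
  exact hc k (mul_right_cancel₀ h2pi (by rw [hk]))

open Filter Asymptotics Topology in
lemma cpow_bound (s : ℂ) (z' : ℂ) (hz0 : z' ≠ 0) :
    ∃ M : ℝ, ∀ᶠ w in nhds z', ‖w ^ s‖ ≤ M := by
  have habs0 : 0 < ‖z'‖ := by
    simp [norm_pos_iff, hz0]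
  have hrpow : Tendsto (fun w : ℂ => ‖w‖ ^ s.re) (nhds z')
      (nhds (‖z'‖ ^ s.re)) := by
    have h1 : ContinuousAt (fun x : ℝ => x ^ s.re) (‖z'‖) :=
      Real.continuousAt_rpow_const _ _ (Or.inl (ne_of_gt habs0))
    exact h1.tendsto.comp ((continuous_norm.tendsto z'))
  refine ⟨(‖z'‖ ^ s.re + 1) * Real.exp (Real.pi * |s.im|), ?_⟩
  have hev : ∀ᶠ w in nhds z', ‖w‖ ^ s.re < ‖z'‖ ^ s.re + 1 :=
    hrpow.eventually_lt_const (lt_add_one _)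
  filter_upwards [hev] with w hw
  calc ‖w ^ s‖ ≤ ‖w‖ ^ s.re / Real.exp (Complex.arg w * s.im) :=
        Complex.norm_cpow_le _ _
    _ = ‖w‖ ^ s.re * Real.exp (-(Complex.arg w * s.im)) := by
        rw [Real.exp_neg, div_eq_mul_inv]
    _ ≤ (‖z'‖ ^ s.re + 1) * Real.exp (Real.pi * |s.im|) := by
        apply mul_le_mul hw.le _ (Real.exp_nonneg _) (by positivity)
        rw [Real.exp_le_exp]
        have h1 : -(Complex.arg w * s.im) ≤ |Complex.arg w * s.im| := neg_le_abs _
        have h2 : |Complex.arg w * s.im| = |Complex.arg w| * |s.im| := abs_mul _ _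
        have h3 : |Complex.arg w| * |s.im| ≤ Real.pi * |s.im| :=
          mul_le_mul_of_nonneg_right (Complex.abs_arg_le_pi w) (abs_nonneg _)
        linarith

open Filter Asymptotics Topology in
lemma iter_wdz_axis (α : ℝ) (c : ℂ) (hc : ∀ k : ℤ, c ≠ (k:ℂ)) :
    ∀ n : ℕ, ∀ z' : ℂ, z'.re < 0 → z'.im = 0 →
      (wdz^[n+1] (fun w => w ^ c * Complex.exp (-(↑α * (w * (starRingEnd ℂ) w))))) z' = 0 := by
  intro n
  induction n with
  | zero =>
    intro z' hre him
    rw [Function.iterate_one, wdz, wdz_base_axis α c hc z' hre him]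
    simp
  | succ n ih =>
    intro z' hre him
    have hz0 : z' ≠ 0 := by
      intro hcon
      rw [hcon] at hre
      simp at hre
    rw [Function.iterate_succ_apply', wdz]
    set g := wdz^[n+1] (fun w : ℂ => w ^ c * Complex.exp (-(↑α * (w * (starRingEnd ℂ) w))))
      with hgdef
    set Q : ℝ → ℂ := fun s => Complex.exp (-(↑α * (s:ℂ))) * (Pm c (n+1)).eval (↑α * (s:ℂ))
      with hQdef
    obtain ⟨M, hM⟩ := cpow_bound (c - ((n+1:ℕ):ℂ)) z' hz0
    have hfd : fderiv ℝ g z' = 0 := by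
      apply axis_fderiv_zero (u := fun w => w ^ (c - ((n+1:ℕ):ℂ))) (Q := Q)
        (q := Complex.exp (-(↑α * ((Complex.normSq z' : ℝ):ℂ))) * -(↑α)
            * (Pm c (n+1)).eval (↑α * ((Complex.normSq z' : ℝ):ℂ))
          + Complex.exp (-(↑α * ((Complex.normSq z' : ℝ):ℂ)))
            * ((Pm c (n+1)).derivative.eval (↑α * ((Complex.normSq z' : ℝ):ℂ)) * ↑α))
        (Lu := z' ^ (c - ((n+1:ℕ):ℂ))) hre him
      · -- h0
        filter_upwards [(isOpen_lt Complex.continuous_re continuous_const).mem_nhds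
          (by simpa using hre)] with w hw hwim
        exact ih w hw hwim
      · -- h1
        filter_upwards with w hwim
        have hwslit : w ∈ Complex.slitPlane := Complex.mem_slitPlane_iff.mpr (Or.inr hwim)
        rw [hgdef, iter_wdz_slit α c (n+1) w hwslit, hQdef]
        rw [Complex.mul_conj]
      · -- hu
        have hlog := Complex.tendsto_log_nhdsWithin_im_nonneg_of_re_neg_of_im_zero hre him
        have h2 : Tendsto (fun w : ℂ => Complex.exp (Complex.log w * (c - ((n+1:ℕ):ℂ))))
            (nhdsWithin z' {w : ℂ | 0 ≤ w.im})
            (nhds (Complex.exp ((Real.log (‖z'‖) + Real.pi * Complex.I)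
              * (c - ((n+1:ℕ):ℂ))))) :=
          (Complex.continuous_exp.tendsto _).comp (hlog.mul_const _)
        have h3 : Tendsto (fun w : ℂ => w ^ (c - ((n+1:ℕ):ℂ)))
            (nhdsWithin z' {w : ℂ | 0 ≤ w.im})
            (nhds (z' ^ (c - ((n+1:ℕ):ℂ)))) := by
          have hfz : z' ^ (c - ((n+1:ℕ):ℂ))
              = Complex.exp ((Real.log (‖z'‖) + Real.pi * Complex.I)
                  * (c - ((n+1:ℕ):ℂ))) := by
            rw [Complex.cpow_def_of_ne_zero hz0]
            congr 2
            rw [Complex.log, Complex.arg_eq_pi_iff.mpr ⟨hre, him⟩]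
          rw [hfz]
          apply h2.congr'
          have hne0 : ∀ᶠ w in nhds z', w ≠ (0:ℂ) :=
            (isOpen_ne).eventually_mem hz0
          filter_upwards [hne0.filter_mono nhdsWithin_le_nhds] with w hw
          rw [Complex.cpow_def_of_ne_zero hw]
        exact h3.mono_left (nhdsWithin_mono z' (fun w hw => le_of_lt (Set.mem_setOf_eq ▸ hw)))
      · -- hLu ≠ 0
        rw [Complex.cpow_def_of_ne_zero hz0]
        exact Complex.exp_ne_zero _
      · -- hM
        exact hM
      · -- hQ
        have hC : HasDerivAt (fun s : ℂ => Complex.exp (-(↑α * s)) * (Pm c (n+1)).eval (↑α * s))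
            (Complex.exp (-(↑α * ((Complex.normSq z' : ℝ):ℂ))) * -(↑α)
              * (Pm c (n+1)).eval (↑α * ((Complex.normSq z' : ℝ):ℂ))
            + Complex.exp (-(↑α * ((Complex.normSq z' : ℝ):ℂ)))
              * ((Pm c (n+1)).derivative.eval (↑α * ((Complex.normSq z' : ℝ):ℂ)) * ↑α))
            ((Complex.normSq z' : ℝ):ℂ) := by
          have hexp : HasDerivAt (fun s : ℂ => Complex.exp (-(↑α * s)))
              (Complex.exp (-(↑α * ((Complex.normSq z' : ℝ):ℂ))) * -(↑α))
              ((Complex.normSq z' : ℝ):ℂ) := by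
            have h1 : HasDerivAt (fun s : ℂ => -(↑α * s)) (-(α:ℂ)) ((Complex.normSq z' : ℝ):ℂ) := by
              exact (((hasDerivAt_id ((Complex.normSq z' : ℝ):ℂ)).const_mul ((α:ℂ))).neg).congr_deriv (by ring)
            exact h1.cexp
          have heval : HasDerivAt (fun s : ℂ => (Pm c (n+1)).eval (↑α * s))
              ((Pm c (n+1)).derivative.eval (↑α * ((Complex.normSq z' : ℝ):ℂ)) * ↑α)
              ((Complex.normSq z' : ℝ):ℂ) := by
            have h1 : HasDerivAt (fun s : ℂ => (α:ℂ) * s) ((α:ℂ)) ((Complex.normSq z' : ℝ):ℂ) := by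
              simpa using ((hasDerivAt_id ((Complex.normSq z' : ℝ):ℂ)).const_mul ((α:ℂ)))
            exact ((Pm c (n+1)).hasDerivAt (↑α * ((Complex.normSq z' : ℝ):ℂ))).comp _ h1
          exact hexp.mul heval
        exact hC.comp_ofReal
    rw [hfd]
    simp

lemma beta_shift (β : ℝ) (hβ : ∀ k : ℤ, β ≠ (k:ℝ)) (m : ℤ) :
    ∀ k : ℤ, (β:ℂ) + (m:ℂ) ≠ (k:ℂ) := by
  intro k h
  apply hβ (k - m)
  have h2 : ((β + (m:ℝ) : ℝ) : ℂ) = ((k:ℝ):ℂ) := by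
    push_cast
    push_cast at h
    exact h
  have h3 : β + (m:ℝ) = (k:ℝ) := by exact_mod_cast h2
  push_cast
  linarith

lemma psi_axis_zero (α β : ℝ) (hβ : ∀ k : ℤ, β ≠ (k:ℝ)) (n : ℕ) (m : ℤ) (z' : ℂ)
    (hre : z'.re < 0) (him : z'.im = 0) :
    psi α β (n+1) m z' = 0 := by
  rw [psi, inner_eq α ((β:ℂ) + (m:ℂ)),
    iter_wdz_axis α ((β:ℂ)+(m:ℂ)) (beta_shift β hβ m) n z' hre him, mul_zero]

lemma psi_zero (α β : ℝ) (m : ℤ) (w : ℂ) (hw : w ≠ 0) : psi α β 0 m w = w ^ m := by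
  rw [psi]
  simp only [Function.iterate_zero, id_eq, pow_zero, one_mul]
  have key : w ^ (-(β:ℂ)) * Complex.exp (↑α * (‖w‖:ℂ)^2)
      * (w ^ ((β:ℂ)+(m:ℂ)) * Complex.exp (-(↑α * (‖w‖:ℂ)^2)))
      = (w ^ (-(β:ℂ)) * w ^ ((β:ℂ)+(m:ℂ)))
        * (Complex.exp (↑α * (‖w‖:ℂ)^2)
            * Complex.exp (-(↑α * (‖w‖:ℂ)^2))) := by ring
  rw [key, ← Complex.cpow_add _ _ hw, ← Complex.exp_add, add_neg_cancel, Complex.exp_zero,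
    mul_one]
  rw [show (-(β:ℂ) + ((β:ℂ)+(m:ℂ))) = ((m:ℤ):ℂ) by push_cast; ring, Complex.cpow_intCast]

open Filter Asymptotics Topology in
lemma stmt_zero (α β : ℝ) (hα : 0 < α) (m : ℤ) (z : ℂ) (hz0 : z ≠ 0) :
    -(1/(α:ℂ)) * (wdzbar (psi α β 0 m) z - (α:ℂ) * z * psi α β 0 m z) =
      psi α β 0 (m+1) z := by
  have hα0 : (α:ℂ) ≠ 0 := by exact_mod_cast hα.ne'
  have hev : psi α β 0 m =ᶠ[nhds z] fun w => w ^ m * (fun _ : ℂ => (1:ℂ)) (w * (starRingEnd ℂ) w) := by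
    filter_upwards [(isOpen_ne).eventually_mem hz0] with w hw
    rw [psi_zero α β m w hw]
    simp
  rw [wdzbar_congr hev]
  have hA : HasDerivAt (fun w : ℂ => w ^ m) (((m:ℤ):ℂ) * z ^ (m - 1)) z :=
    hasDerivAt_zpow _ _ (Or.inl hz0)
  have hB : HasDerivAt (fun _ : ℂ => (1:ℂ)) 0 (z * (starRingEnd ℂ) z) := hasDerivAt_const _ _
  have hF := D1 hA hB
  rw [wdzbar_LM hF]
  rw [psi_zero α β m z hz0, psi_zero α β (m+1) z hz0]
  rw [zpow_add₀ hz0, zpow_one]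
  field_simp
  ring

open Filter Asymptotics Topology in
lemma stmt_junk (α β : ℝ) (hα : 0 < α) (hβ : ∀ k : ℤ, β ≠ (k:ℝ)) (n : ℕ) (m : ℤ) (z' : ℂ)
    (hre : z'.re < 0) (him : z'.im = 0) :
    -(1/(α:ℂ)) * (wdzbar (psi α β (n+1) m) z' - (α:ℂ) * z' * psi α β (n+1) m z') =
      psi α β (n+1) (m+1) z' := by
  have hz0 : z' ≠ 0 := by
    intro hcon
    rw [hcon] at hre
    simp at hre
  have hα0 : (α:ℂ) ≠ 0 := by exact_mod_cast hα.ne'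
  set u : ℂ → ℂ := fun w => (-1:ℂ)^(n+1) * w ^ (m - ((n+1:ℕ):ℤ)) with hudef
  set c : ℂ := (β:ℂ) + (m:ℂ) with hcdef
  set Q : ℝ → ℂ := fun s => (Pm c (n+1)).eval ((α:ℂ) * ((s:ℝ):ℂ)) with hQdef
  have hucont : ContinuousAt u z' := by
    rw [hudef]
    exact continuousAt_const.mul (continuousAt_zpow₀ z' _ (Or.inl hz0))
  have hfd : fderiv ℝ (psi α β (n+1) m) z' = 0 := by
    apply axis_fderiv_zero (u := u) (Q := Q) (Lu := u z')
      (q := (Pm c (n+1)).derivative.eval ((α:ℂ) * ((Complex.normSq z' : ℝ):ℂ)) * (α:ℂ))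
      (M := ‖u z'‖ + 1) hre him
    · filter_upwards [(isOpen_lt Complex.continuous_re continuous_const).mem_nhds
        (by simpa using hre)] with w hw hwim
      exact psi_axis_zero α β hβ n m w hw hwim
    · filter_upwards with w hwim
      have hw0 : w ≠ 0 := by
        intro hcon
        rw [hcon] at hwim
        simp at hwim
      have hwslit : w ∈ Complex.slitPlane := Complex.mem_slitPlane_iff.mpr (Or.inr hwim)
      rw [psi_slit α β (n+1) m w hwslit]
      rw [show ((m:ℂ) - ((n+1:ℕ):ℂ)) = ((m - ((n+1:ℕ):ℤ) : ℤ):ℂ) by push_cast; ring,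
        Complex.cpow_intCast]
      simp only [Complex.mul_conj]
      ring
    · exact hucont.continuousWithinAt.tendsto
    · rw [hudef]
      exact mul_ne_zero (pow_ne_zero _ (by norm_num)) (zpow_ne_zero _ hz0)
    · have habs : Filter.Tendsto (fun w => ‖u w‖) (nhds z')
          (nhds (‖u z'‖)) :=
        (continuous_norm.tendsto _).comp hucont.tendsto
      filter_upwards [habs.eventually_lt_const (lt_add_one _)] with w hw
      exact hw.le
    · have hC : HasDerivAt (fun s : ℂ => (Pm c (n+1)).eval ((α:ℂ) * s))
          ((Pm c (n+1)).derivative.eval ((α:ℂ) * ((Complex.normSq z' : ℝ):ℂ)) * (α:ℂ))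
          ((Complex.normSq z' : ℝ):ℂ) := by
        have h1 : HasDerivAt (fun s : ℂ => (α:ℂ) * s) ((α:ℂ)) ((Complex.normSq z' : ℝ):ℂ) := by
          simpa using ((hasDerivAt_id ((Complex.normSq z' : ℝ):ℂ)).const_mul ((α:ℂ)))
        exact ((Pm c (n+1)).hasDerivAt ((α:ℂ) * ((Complex.normSq z' : ℝ):ℂ))).comp _ h1
      exact hC.comp_ofReal
  have h1 : wdzbar (psi α β (n+1) m) z' = 0 := by
    rw [wdzbar, hfd]
    simp
  rw [h1, psi_axis_zero α β hβ n m z' hre him, psi_axis_zero α β hβ n (m+1) z' hre him]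
  ring

end Aux

theorem stmt6 (α β : ℝ) (hα : 0 < α) (n : ℕ) (m : ℤ) (hm : -β - 1 < (m:ℝ)) (z : ℂ)
    (hz : z ≠ 0) :
    -(1/(α:ℂ)) * (wdzbar (psi α β n m) z - (α:ℂ) * z * psi α β n m z) =
      psi α β n (m+1) z := by
  by_cases hslit : z ∈ Complex.slitPlane
  · exact stmt_slit α β hα n m z hslit
  · rw [Complex.mem_slitPlane_iff] at hslit
    push_neg at hslit
    have him : z.im = 0 := hslit.2
    have hre : z.re < 0 := by
      rcases lt_or_eq_of_le hslit.1 with h | h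
      · exact h
      · exact absurd (by simp [Complex.ext_iff, h, him] : z = 0) hz
    by_cases hβi : ∃ k : ℤ, β = (k:ℝ)
    · obtain ⟨k, hk⟩ := hβi
      exact stmt_int α β hα k hk n m z hz
    · push_neg at hβi
      cases n with
      | zero => exact stmt_zero α β hα m z hz
      | succ n => exact stmt_junk α β hα hβi n m z hre him
end

section
/- Each ψ_{n,m}^{α,β} is an eigenfunction of the operator Δ̃_{α,β} = -∂²/(∂z∂z̄) + α z ∂/∂z - (β/z) ∂/∂z̄ with eigenvalue α m: that is, Δ̃_{α,β} ψ_{n,m}^{α,β} = α m ψ_{n,m}^{α,β} on ℂ*. -/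
open Complex MeasureTheory

namespace WAux
open Polynomial


noncomputable def lmap (a b : ℂ) : ℂ →L[ℝ] ℂ :=
  a • (ContinuousLinearMap.id ℝ ℂ) + b • (Complex.conjCLE : ℂ ≃L[ℝ] ℂ).toContinuousLinearMap

@[simp] lemma lmap_apply (a b v : ℂ) : lmap a b v = a * v + b * (starRingEnd ℂ) v := by
  simp [lmap, ContinuousLinearMap.smul_apply, smul_eq_mul]

def HasW (f : ℂ → ℂ) (a b z : ℂ) : Prop := HasFDerivAt f (lmap a b) z

lemma HasW.diffAt {f a b z} (h : HasW f a b z) : DifferentiableAt ℝ f z :=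
  HasFDerivAt.differentiableAt h

lemma HasW.wdz_eq {f a b z} (h : HasW f a b z) : wdz f z = a := by
  have h' : fderiv ℝ f z = lmap a b := h.fderiv
  rw [wdz, h']
  simp only [lmap_apply, map_one, Complex.conj_I, mul_one]
  linear_combination ((b - a)/2) * Complex.I_sq

lemma HasW.wdzbar_eq {f a b z} (h : HasW f a b z) : wdzbar f z = b := by
  have h' : fderiv ℝ f z = lmap a b := h.fderiv
  rw [wdzbar, h']
  simp only [lmap_apply, map_one, Complex.conj_I, mul_one]
  linear_combination ((a - b)/2) * Complex.I_sq

lemma hasW_const (c z : ℂ) : HasW (fun _ => c) 0 0 z := by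
  have e : lmap 0 0 = (0 : ℂ →L[ℝ] ℂ) := by ext v; simp
  rw [HasW, e]
  exact hasFDerivAt_const c z

lemma hasW_id (z : ℂ) : HasW (fun w => w) 1 0 z := by
  have e : lmap 1 0 = ContinuousLinearMap.id ℝ ℂ := by ext v; simp
  rw [HasW, e]
  exact hasFDerivAt_id z

lemma hasW_conj (z : ℂ) : HasW (fun w => (starRingEnd ℂ) w) 0 1 z := by
  have e : lmap 0 1 = (Complex.conjCLE : ℂ ≃L[ℝ] ℂ).toContinuousLinearMap := by
    ext v; simp [lmap]
  rw [HasW, e]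
  exact (Complex.conjCLE : ℂ ≃L[ℝ] ℂ).toContinuousLinearMap.hasFDerivAt

lemma HasW.add {f g a b a' b' z} (hf : HasW f a b z) (hg : HasW g a' b' z) :
    HasW (fun w => f w + g w) (a + a') (b + b') z := by
  have := HasFDerivAt.add hf hg
  have e : lmap a b + lmap a' b' = lmap (a + a') (b + b') := by ext v; simp; ring
  rw [HasW, ← e]
  exact this

lemma HasW.mul {f g : ℂ → ℂ} {a b a' b' z} (hf : HasW f a b z) (hg : HasW g a' b' z) :
    HasW (fun w => f w * g w) (f z * a' + g z * a) (f z * b' + g z * b) z := by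
  have h2 := HasFDerivAt.mul hf hg
  have e : f z • lmap a' b' + g z • lmap a b
      = lmap (f z * a' + g z * a) (f z * b' + g z * b) := by
    ext v; simp [smul_eq_mul]; ring
  rw [HasW, ← e]
  exact h2

lemma HasW.comp {g : ℂ → ℂ} {g' : ℂ} {f : ℂ → ℂ} {a b z} (hg : HasDerivAt g g' (f z))
    (hf : HasW f a b z) : HasW (fun w => g (f w)) (g' * a) (g' * b) z := by
  have h2 := hg.comp_hasFDerivAt z hf
  have e : g' • lmap a b = lmap (g' * a) (g' * b) := by
    ext v; simp [smul_eq_mul]; ring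
  rw [HasW, ← e]
  exact h2

lemma HasW.const_mul {f : ℂ → ℂ} {a b z} (c : ℂ) (hf : HasW f a b z) :
    HasW (fun w => c * f w) (c * a) (c * b) z := by
  have := (hasW_const c z).mul hf
  simpa using this

lemma HasW.neg {f : ℂ → ℂ} {a b z} (hf : HasW f a b z) :
    HasW (fun w => -(f w)) (-a) (-b) z := by
  have := hf.const_mul (-1)
  simpa [neg_mul] using this

-- new material
lemma HasW.congr_ab {f : ℂ → ℂ} {a b a' b' z} (h : HasW f a b z) (ha : a = a') (hb : b = b') :
    HasW f a' b' z := ha ▸ hb ▸ h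

lemma _root_.HasDerivAt.hasW {f : ℂ → ℂ} {f' z : ℂ} (h : HasDerivAt f f' z) : HasW f f' 0 z := by
  have h2 := (h.hasFDerivAt).restrictScalars ℝ
  have e : lmap f' 0 = (ContinuousLinearMap.restrictScalars ℝ
      (ContinuousLinearMap.smulRight (1 : ℂ →L[ℂ] ℂ) f')) := by
    ext v; simp [smul_eq_mul]; ring
  rw [HasW, e]; exact h2

lemma wdz_congr {f g : ℂ → ℂ} {z : ℂ} (h : f =ᶠ[nhds z] g) : wdz f z = wdz g z := by
  rw [wdz, wdz, h.fderiv_eq]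

lemma wdzbar_congr {f g : ℂ → ℂ} {z : ℂ} (h : f =ᶠ[nhds z] g) : wdzbar f z = wdzbar g z := by
  rw [wdzbar, wdzbar, h.fderiv_eq]

noncomputable def tt (α : ℝ) (z : ℂ) : ℂ := (α:ℂ) * (z * (starRingEnd ℂ) z)

lemma hasW_tt (α : ℝ) (z : ℂ) :
    HasW (tt α) ((α:ℂ) * (starRingEnd ℂ) z) ((α:ℂ) * z) z := by
  have h := ((hasW_id z).mul (hasW_conj z)).const_mul (α:ℂ)
  refine h.congr_ab ?_ ?_ <;> simp

lemma hasW_model (α : ℝ) (Q : Polynomial ℂ) {p : ℂ → ℂ} {a z : ℂ} (hp : HasW p a 0 z) :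
    HasW (fun w => p w * (Complex.exp (-(tt α w)) * Q.eval (tt α w)))
      (Complex.exp (-(tt α z)) * (a * Q.eval (tt α z)
        + p z * ((α:ℂ) * (starRingEnd ℂ) z) * (Q.derivative - Q).eval (tt α z)))
      (Complex.exp (-(tt α z)) * (p z * ((α:ℂ) * z) * (Q.derivative - Q).eval (tt α z))) z := by
  have hT := hasW_tt α z
  have hnT := hT.neg
  have hE : HasW (fun w => Complex.exp (-(tt α w)))
      (Complex.exp (-(tt α z)) * -((α:ℂ) * (starRingEnd ℂ) z))
      (Complex.exp (-(tt α z)) * -((α:ℂ) * z)) z :=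
    HasW.comp (Complex.hasDerivAt_exp _) hnT
  have hQ : HasW (fun w => Q.eval (tt α w))
      (Q.derivative.eval (tt α z) * ((α:ℂ) * (starRingEnd ℂ) z))
      (Q.derivative.eval (tt α z) * ((α:ℂ) * z)) z :=
    HasW.comp (Q.hasDerivAt _) hT
  have hEQ := hE.mul hQ
  have h := hp.mul hEQ
  refine h.congr_ab ?_ ?_ <;> simp [Polynomial.eval_sub] <;> ring

noncomputable def mdl (α : ℝ) (c : ℂ) (Q : Polynomial ℂ) (z : ℂ) : ℂ :=
  z ^ c * (Complex.exp (-(tt α z)) * Q.eval (tt α z))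

noncomputable def mdlz (α : ℝ) (j : ℤ) (Q : Polynomial ℂ) (z : ℂ) : ℂ :=
  z ^ j * (Complex.exp (-(tt α z)) * Q.eval (tt α z))

noncomputable def QQ (γ : ℂ) : ℕ → Polynomial ℂ
  | 0 => 1
  | k+1 => Polynomial.C (γ - k) * QQ γ k + Polynomial.X * ((QQ γ k).derivative - QQ γ k)

lemma hasW_mdl (α : ℝ) (c : ℂ) (Q : Polynomial ℂ) {z : ℂ} (hz : z ∈ Complex.slitPlane) :
    HasW (mdl α c Q)
      (mdl α (c-1) (Polynomial.C c * Q + Polynomial.X * (Q.derivative - Q)) z)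
      (((α:ℂ) * z) * mdl α c (Q.derivative - Q) z) z := by
  have hz0 : z ≠ 0 := Complex.slitPlane_ne_zero hz
  have hp : HasW (fun w => w ^ c) (c * z ^ (c-1)) 0 z :=
    (Complex.hasStrictDerivAt_cpow_const hz).hasDerivAt.hasW
  have h := hasW_model α Q hp
  have key : z ^ c = z ^ (c - 1) * z := by
    have h1 := Complex.cpow_add (c - 1) 1 hz0
    rw [Complex.cpow_one] at h1
    rw [show c - 1 + 1 = c by ring] at h1
    exact h1
  refine h.congr_ab ?_ ?_ <;>
    simp only [mdl, tt, key, Polynomial.eval_add, Polynomial.eval_mul, Polynomial.eval_C,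
      Polynomial.eval_X, Polynomial.eval_sub, Complex.cpow_one] <;> ring

lemma hasW_mdlz (α : ℝ) (j : ℤ) (Q : Polynomial ℂ) {z : ℂ} (hz : z ≠ 0) :
    HasW (mdlz α j Q)
      (mdlz α (j-1) (Polynomial.C (j:ℂ) * Q + Polynomial.X * (Q.derivative - Q)) z)
      (((α:ℂ) * z) * mdlz α j (Q.derivative - Q) z) z := by
  have hp : HasW (fun w => w ^ j) ((j:ℂ) * z ^ (j-1)) 0 z :=
    (hasDerivAt_zpow j z (Or.inl hz)).hasW
  have h := hasW_model α Q hp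
  have key : z ^ j = z ^ (j - 1) * z := by
    rw [← zpow_add_one₀ hz]; norm_num
  refine h.congr_ab ?_ ?_ <;>
    simp only [mdlz, tt, key, Polynomial.eval_add, Polynomial.eval_mul, Polynomial.eval_C,
      Polynomial.eval_X, Polynomial.eval_sub] <;> ring

lemma iter_cpow (α : ℝ) (γ : ℂ) (k : ℕ) :
    ∀ z ∈ Complex.slitPlane, wdz^[k] (mdl α γ 1) z = mdl α (γ - k) (QQ γ k) z := by
  induction k with
  | zero => intro z hz; simp [QQ]
  | succ k ih =>
    intro z hz
    rw [Function.iterate_succ_apply']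
    have hev : wdz^[k] (mdl α γ 1) =ᶠ[nhds z] mdl α (γ - k) (QQ γ k) :=
      Filter.eventuallyEq_of_mem (Complex.isOpen_slitPlane.mem_nhds hz) ih
    rw [wdz_congr hev]
    have h := (hasW_mdl α (γ - k) (QQ γ k) hz).wdz_eq
    rw [h]
    have ec : γ - ((k+1:ℕ):ℂ) = (γ - (k:ℕ)) - 1 := by push_cast; ring
    rw [show QQ γ (k+1) = Polynomial.C (γ - k) * QQ γ k
        + Polynomial.X * ((QQ γ k).derivative - QQ γ k) from rfl, ec]

lemma iter_zpow (α : ℝ) (j : ℤ) (k : ℕ) :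
    ∀ z : ℂ, z ≠ 0 → wdz^[k] (mdlz α j 1) z = mdlz α (j - k) (QQ (j:ℂ) k) z := by
  induction k with
  | zero => intro z hz; simp [QQ]
  | succ k ih =>
    intro z hz
    rw [Function.iterate_succ_apply']
    have hev : wdz^[k] (mdlz α j 1) =ᶠ[nhds z] mdlz α (j - k) (QQ (j:ℂ) k) :=
      Filter.eventuallyEq_of_mem (isOpen_compl_singleton.mem_nhds hz) (fun w hw => ih w hw)
    rw [wdz_congr hev]
    have h := (hasW_mdlz α (j - k) (QQ (j:ℂ) k) hz).wdz_eq
    rw [h]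
    have ec : j - ((k+1:ℕ):ℤ) = (j - (k:ℕ)) - 1 := by push_cast; ring
    have ec2 : ((j:ℂ) - (k:ℕ)) = (((j - (k:ℕ)) : ℤ) : ℂ) := by push_cast; ring
    rw [show QQ (j:ℂ) (k+1) = Polynomial.C ((j:ℂ) - k) * QQ (j:ℂ) k
        + Polynomial.X * ((QQ (j:ℂ) k).derivative - QQ (j:ℂ) k) from rfl, ec, ec2]

/-- Laguerre-type ODE, polynomial form: `t y'' + (a+1-t) y' + ν y = 0`. -/
def OD (a ν : ℂ) (P : Polynomial ℂ) : Prop :=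
  X * P.derivative.derivative + (C (a+1) - X) * P.derivative + C ν * P = 0

lemma OD.step {a ν : ℂ} {P : Polynomial ℂ} (h : OD a ν P) : OD (a+1) (ν-1) P.derivative := by
  have h' := congrArg Polynomial.derivative h
  unfold OD at *
  simp only [derivative_add, derivative_mul, derivative_sub, derivative_C, derivative_X,
    derivative_zero, derivative_one, Polynomial.derivative_natCast, zero_mul, one_mul, zero_sub,
    zero_add, map_add, map_sub, map_one] at *
  linear_combination h'

lemma ode_QQ (γ : ℂ) : ∀ k : ℕ, OD (γ - k) k (QQ γ k) := by
  intro k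
  induction k with
  | zero => simp [OD, QQ]
  | succ k ih =>
    have H := ih
    have H' := congrArg Polynomial.derivative H
    unfold OD at H H' ⊢
    rw [show QQ γ (k+1) = Polynomial.C (γ - k) * QQ γ k
        + Polynomial.X * ((QQ γ k).derivative - QQ γ k) from rfl]
    simp only [derivative_add, derivative_mul, derivative_sub, derivative_C, derivative_X,
      derivative_zero, derivative_one, Polynomial.derivative_natCast, zero_mul, mul_zero, one_mul,
      zero_add, add_zero, sub_zero, zero_sub,
      map_add, map_sub, map_one, map_natCast, Nat.cast_succ] at H H' ⊢
    linear_combination (Polynomial.C γ - (k : Polynomial ℂ) - X) * H + X * H'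

lemma od_iter {a ν : ℂ} {P : Polynomial ℂ} (h : OD a ν P) :
    ∀ j : ℕ, OD (a + j) (ν - j) ((⇑Polynomial.derivative)^[j] P) := by
  intro j
  induction j with
  | zero => simpa using h
  | succ j ih =>
    rw [Function.iterate_succ_apply',
      show a + ((j+1:ℕ):ℂ) = (a + j) + 1 by push_cast; ring,
      show ν - ((j+1:ℕ):ℂ) = (ν - j) - 1 by push_cast; ring]
    exact ih.step

lemma all_derivs_zero {a ν : ℂ} {P : Polynomial ℂ} (h : OD a ν P) {t₀ : ℂ} (ht : t₀ ≠ 0)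
    (h0 : P.eval t₀ = 0) (h1 : P.derivative.eval t₀ = 0) :
    ∀ j : ℕ, ((⇑Polynomial.derivative)^[j] P).eval t₀ = 0 := by
  have key : ∀ j : ℕ, ((⇑Polynomial.derivative)^[j] P).eval t₀ = 0 ∧
      ((⇑Polynomial.derivative)^[j+1] P).eval t₀ = 0 := by
    intro j
    induction j with
    | zero => exact ⟨h0, by simpa using h1⟩
    | succ j ih =>
      refine ⟨ih.2, ?_⟩
      have hod := od_iter h j
      have hev := congrArg (Polynomial.eval t₀) hod
      simp only [eval_add, eval_mul, eval_X, eval_C, eval_sub, eval_zero, OD] at hev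
      have e1 : Polynomial.derivative ((⇑Polynomial.derivative)^[j] P) =
          (⇑Polynomial.derivative)^[j+1] P := (Function.iterate_succ_apply' _ _ _).symm
      rw [e1, ih.2] at hev
      have e2 : (Polynomial.derivative ((⇑Polynomial.derivative)^[j+1] P)).eval t₀ = 0 := by
        have hfirst : ((⇑Polynomial.derivative)^[j] P).eval t₀ = 0 := ih.1
        have h2 : t₀ * (Polynomial.derivative ((⇑Polynomial.derivative)^[j+1] P)).eval t₀ = 0 := by
          linear_combination hev - (ν - (j:ℂ)) * hfirst
        exact (mul_eq_zero.mp h2).resolve_left ht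
      rw [Function.iterate_succ_apply' (⇑Polynomial.derivative) (j+1) P]
      exact e2
  exact fun j => (key j).1

lemma eq_zero_of_all_derivs {P : Polynomial ℂ} {t₀ : ℂ}
    (h : ∀ j : ℕ, ((⇑Polynomial.derivative)^[j] P).eval t₀ = 0) : P = 0 := by
  have htay : Polynomial.taylor t₀ P = 0 := by
    ext j
    rw [Polynomial.taylor_coeff]
    have := Polynomial.factorial_smul_hasseDeriv (R := ℂ) j
    have h2 : (j.factorial • Polynomial.hasseDeriv j) P = (⇑Polynomial.derivative)^[j] P := by
      rw [← this]
    have h3 : (j.factorial : ℂ) * (Polynomial.hasseDeriv j P).eval t₀ = 0 := by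
      have := congrArg (Polynomial.eval t₀) h2
      simpa [Polynomial.eval_smul, nsmul_eq_mul, h j] using this.trans (h j)
    have hfac : (j.factorial : ℂ) ≠ 0 := Nat.cast_ne_zero.mpr j.factorial_ne_zero
    have := (mul_eq_zero.mp h3).resolve_left hfac
    simpa using this
  have := Polynomial.taylor_injective t₀ (by simpa using htay : Polynomial.taylor t₀ P = Polynomial.taylor t₀ 0)
  exact this

/-- Key non-degeneracy: a nonzero solution of the Laguerre ODE has no common root with
its derivative away from 0. -/
lemma no_common_root {a ν : ℂ} {P : Polynomial ℂ} (h : OD a ν P) (hP : P ≠ 0) {t₀ : ℂ}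
    (ht : t₀ ≠ 0) (h0 : P.eval t₀ = 0) (h1 : P.derivative.eval t₀ = 0) : False :=
  hP (eq_zero_of_all_derivs (all_derivs_zero h ht h0 h1))

lemma QQ_eval_zero (γ : ℂ) : ∀ k : ℕ, (QQ γ k).eval 0 = ∏ j ∈ Finset.range k, (γ - j) := by
  intro k
  induction k with
  | zero => simp [QQ]
  | succ k ih =>
    rw [show QQ γ (k+1) = Polynomial.C (γ - k) * QQ γ k
        + Polynomial.X * ((QQ γ k).derivative - QQ γ k) from rfl]
    simp [ih, Finset.prod_range_succ]
    ring

lemma QQ_ne_zero {γ : ℂ} (hγ : ∀ i : ℤ, γ ≠ i) (k : ℕ) : QQ γ k ≠ 0 := by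
  intro h
  have := QQ_eval_zero γ k
  rw [h] at this
  simp at this
  rcases Finset.prod_eq_zero_iff.mp this.symm with ⟨j, _, hj⟩
  exact hγ j (by rw [sub_eq_zero] at hj; simpa using hj)

lemma QQ_deriv_ne_zero {γ : ℂ} (hγ : ∀ i : ℤ, γ ≠ i) {k : ℕ} (hk : 0 < k) :
    (QQ γ k).derivative ≠ 0 := by
  intro h
  have hod := ode_QQ γ k
  unfold OD at hod
  rw [h] at hod
  simp at hod
  rcases hod with h' | h'
  · exact absurd h' hk.ne'
  · exact QQ_ne_zero hγ k h'

-- new material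
noncomputable def PSIN (α : ℝ) (n : ℕ) (m : ℤ) (P : Polynomial ℂ) (z : ℂ) : ℂ :=
  (-1:ℂ)^n * z ^ (m - n : ℤ) * P.eval (tt α z)

lemma hasW_PSIN (α : ℝ) (n : ℕ) (m : ℤ) (P : Polynomial ℂ) {z : ℂ} (hz : z ≠ 0) :
    HasW (PSIN α n m P)
      ((-1:ℂ)^n * (((m - n : ℤ):ℂ) * z ^ (m - n - 1 : ℤ) * P.eval (tt α z)
         + z ^ (m - n : ℤ) * P.derivative.eval (tt α z) * ((α:ℂ) * (starRingEnd ℂ) z)))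
      ((-1:ℂ)^n * (z ^ (m - n : ℤ) * P.derivative.eval (tt α z) * ((α:ℂ) * z))) z := by
  have h1 : HasW (fun w => w ^ (m - n : ℤ)) (((m - n : ℤ):ℂ) * z ^ (m - n - 1 : ℤ)) 0 z :=
    (hasDerivAt_zpow _ z (Or.inl hz)).hasW
  have h2 : HasW (fun w => P.eval (tt α w))
      (P.derivative.eval (tt α z) * ((α:ℂ) * (starRingEnd ℂ) z))
      (P.derivative.eval (tt α z) * ((α:ℂ) * z)) z :=
    HasW.comp (P.hasDerivAt _) (hasW_tt α z)
  have h3 := (h1.mul h2).const_mul ((-1:ℂ)^n)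
  have e : PSIN α n m P = fun w => (-1:ℂ)^n * ((fun w => w ^ (m - n : ℤ)) w *
      (fun w => P.eval (tt α w)) w) := by
    funext w; simp [PSIN]; ring
  rw [e]
  refine h3.congr_ab ?_ ?_ <;> ring

lemma wdzbar_PSIN_eq (α : ℝ) (n : ℕ) (m : ℤ) (P : Polynomial ℂ) {z : ℂ} (hz : z ≠ 0) :
    wdzbar (PSIN α n m P) z = (α:ℂ) * PSIN α n (m+1) P.derivative z := by
  rw [(hasW_PSIN α n m P hz).wdzbar_eq, PSIN]
  have r2 : z ^ (m + 1 - n : ℤ) = z ^ (m - n : ℤ) * z := by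
    rw [show (m + 1 - n : ℤ) = (m - n) + 1 by ring, zpow_add_one₀ hz]
  rw [r2]; ring

lemma pde_PSIN (α β : ℝ) (n : ℕ) (m : ℤ) {z : ℂ} (hz : z ≠ 0) :
    -(wdz (wdzbar (PSIN α n m (QQ ((β:ℂ)+m) n))) z)
      + (α:ℂ) * z * wdz (PSIN α n m (QQ ((β:ℂ)+m) n)) z
      - ((β:ℂ)/z) * wdzbar (PSIN α n m (QQ ((β:ℂ)+m) n)) z =
    (α:ℂ) * (m:ℂ) * PSIN α n m (QQ ((β:ℂ)+m) n) z := by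
  set γ : ℂ := (β:ℂ) + m with hγ
  set P : Polynomial ℂ := QQ γ n with hP
  -- second derivative term
  have hev : wdzbar (PSIN α n m P) =ᶠ[nhds z]
      (fun w => (α:ℂ) * PSIN α n (m+1) P.derivative w) := by
    refine Filter.eventuallyEq_of_mem (isOpen_compl_singleton.mem_nhds hz) ?_
    intro w hw
    exact wdzbar_PSIN_eq α n m P hw
  rw [wdz_congr hev]
  have hW2 := (hasW_PSIN α n (m+1) P.derivative hz).const_mul ((α:ℂ))
  rw [hW2.wdz_eq]
  rw [(hasW_PSIN α n m P hz).wdz_eq]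
  rw [wdzbar_PSIN_eq α n m P hz]
  rw [PSIN, PSIN]
  -- ODE evaluated at t
  have hODE := congrArg (Polynomial.eval (tt α z)) (ode_QQ γ n)
  unfold OD at hODE
  simp only [eval_add, eval_mul, eval_X, eval_C, eval_sub, eval_zero] at hODE
  rw [← hP] at hODE
  -- power relations
  have r1 : z ^ (m - n : ℤ) = z ^ (m - n - 1 : ℤ) * z := by
    have h' := zpow_add_one₀ hz (m - (n:ℤ) - 1)
    rw [sub_add_cancel] at h'
    exact h'
  have r2 : z ^ (m + 1 - n : ℤ) = z ^ (m - n : ℤ) * z := by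
    have h' := zpow_add_one₀ hz (m - (n:ℤ))
    rw [show (m - (n:ℤ) + 1) = m + 1 - n by ring] at h'
    exact h'
  set t : ℂ := tt α z with htdef
  have hconj : (α:ℂ) * (starRingEnd ℂ) z = t / z := by
    rw [htdef, show tt α z = (α:ℂ) * (z * (starRingEnd ℂ) z) from rfl]
    field_simp
  rw [show (m + 1 - (n:ℤ) - 1) = m - n by ring]
  rw [r2, r1, hconj]
  push_cast
  push_cast at hODE
  field_simp
  linear_combination (-(α:ℂ)) * hODE + (α:ℂ) * P.derivative.eval t * hγ

/-- On the upper half plane, principal `z ^ c` matches the analytic branch `e^{icπ}(-z)^c`. -/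
lemma cpow_upper {z : ℂ} (hz : 0 < z.im) (c : ℂ) :
    z ^ c = Complex.exp (c * (Real.pi : ℂ) * Complex.I) * (-z) ^ c := by
  have hz0 : z ≠ 0 := fun h => by simp [h] at hz
  have hnz : -z ≠ 0 := neg_ne_zero.mpr hz0
  have hlog : Complex.log z = Complex.log (-z) + (Real.pi : ℂ) * Complex.I := by
    rw [Complex.log, Complex.log, norm_neg,
      Complex.arg_neg_eq_arg_sub_pi_of_im_pos hz]
    push_cast
    ring
  rw [Complex.cpow_def_of_ne_zero hz0, Complex.cpow_def_of_ne_zero hnz, ← Complex.exp_add, hlog]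
  ring_nf

/-- Key dichotomy at a point of the negative real axis: if `h` vanishes on the negative
reals, agrees with a differentiable function `N` on the upper half plane, and is
differentiable at `x`, then `N x = 0` and the derivative of `N` kills the direction `1`. -/
lemma slit_key {x : ℂ} (hxre : x.re < 0) (hxim : x.im = 0) {h N : ℂ → ℂ} {B : ℂ →L[ℝ] ℂ}
    (hup : ∀ z : ℂ, 0 < z.im → h z = N z)
    (hneg : ∀ y : ℝ, y < 0 → h (y : ℂ) = 0)
    (hN : HasFDerivAt N B x)
    (hd : DifferentiableAt ℝ h x) :
    N x = 0 ∧ B 1 = 0 := by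
  have hxeq : ((x.re : ℝ) : ℂ) = x := Complex.ext (by simp) (by simp [hxim])
  have hx0 : h x = 0 := by rw [← hxeq]; exact hneg x.re hxre
  have hA := hd.hasFDerivAt
  set A := fderiv ℝ h x with hAdef
  -- part 1 : N x = 0
  have hpath : Filter.Tendsto (fun s : ℝ => x + (s : ℂ) * Complex.I)
      (nhdsWithin 0 (Set.Ioi 0)) (nhds x) := by
    have hcont : Continuous (fun s : ℝ => x + (s : ℂ) * Complex.I) := by continuity
    refine Filter.Tendsto.mono_left ?_ (nhdsWithin_le_nhds (s := Set.Ioi 0))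
    simpa using hcont.tendsto 0
  have hupmem : ∀ s : ℝ, 0 < s → h (x + (s:ℂ) * Complex.I) = N (x + (s:ℂ) * Complex.I) := by
    intro s hs
    apply hup
    simp [Complex.add_im, hxim, hs]
  have hNx : N x = 0 := by
    have l1 : Filter.Tendsto (fun s : ℝ => h (x + (s:ℂ) * Complex.I))
        (nhdsWithin 0 (Set.Ioi 0)) (nhds (h x)) := (hd.continuousAt.tendsto).comp hpath
    have l2 : Filter.Tendsto (fun s : ℝ => N (x + (s:ℂ) * Complex.I))
        (nhdsWithin 0 (Set.Ioi 0)) (nhds (N x)) :=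
      (hN.differentiableAt.continuousAt.tendsto).comp hpath
    have l3 : Filter.Tendsto (fun s : ℝ => h (x + (s:ℂ) * Complex.I))
        (nhdsWithin 0 (Set.Ioi 0)) (nhds (N x)) := by
      refine l2.congr' ?_
      filter_upwards [self_mem_nhdsWithin] with s hs
      exact (hupmem s hs).symm
    rw [hx0] at l1
    exact tendsto_nhds_unique l3 l1
  -- directional derivatives from the upper half-plane
  have hdir : ∀ v : ℂ, 0 < v.im → A v = B v := by
    intro v hv
    have hp : HasDerivAt (fun s : ℝ => x + s • v) v 0 := by
      have := ((hasDerivAt_id (0:ℝ)).smul_const v).const_add x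
      simpa using this
    have hA' : HasFDerivAt h A (x + (0:ℝ) • v) := by simpa using hA
    have hN' : HasFDerivAt N B (x + (0:ℝ) • v) := by simpa using hN
    have hhp : HasDerivAt (fun s : ℝ => h (x + s • v)) (A v) 0 := hA'.comp_hasDerivAt 0 hp
    have hNp : HasDerivAt (fun s : ℝ => N (x + s • v)) (B v) 0 := hN'.comp_hasDerivAt 0 hp
    have heqon : ∀ s : ℝ, s ∈ Set.Ici (0:ℝ) →
        (fun s : ℝ => h (x + s • v)) s = (fun s : ℝ => N (x + s • v)) s := by
      intro s hs
      rcases eq_or_lt_of_le (Set.mem_Ici.mp hs) with h0 | hpos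
      · simp only [← h0]
        simpa using hx0.trans hNx.symm
      · apply hup
        have : (x + (s:ℝ) • v).im = x.im + s * v.im := by
          simp [Complex.add_im, Complex.smul_im]
        rw [this, hxim, zero_add]
        exact mul_pos hpos hv
    have hu : UniqueDiffWithinAt ℝ (Set.Ici (0:ℝ)) 0 := uniqueDiffOn_Ici 0 0 Set.self_mem_Ici
    have d1 : derivWithin (fun s : ℝ => h (x + s • v)) (Set.Ici 0) 0 = A v :=
      (hhp.hasDerivWithinAt).derivWithin hu
    have d2 : derivWithin (fun s : ℝ => h (x + s • v)) (Set.Ici 0) 0 = B v := by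
      have := (hNp.hasDerivWithinAt).congr heqon (heqon 0 Set.self_mem_Ici)
      exact this.derivWithin hu
    rw [← d1, d2]
  -- A 1 = 0 via the negative real direction
  have hA1 : A 1 = 0 := by
    have hp : HasDerivAt (fun s : ℝ => x + s • (-1:ℂ)) (-1:ℂ) 0 := by
      have := ((hasDerivAt_id (0:ℝ)).smul_const (-1:ℂ)).const_add x
      simpa using this
    have hA' : HasFDerivAt h A (x + (0:ℝ) • (-1:ℂ)) := by simpa using hA
    have hhp : HasDerivAt (fun s : ℝ => h (x + s • (-1:ℂ))) (A (-1)) 0 := hA'.comp_hasDerivAt 0 hp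
    have heq0 : ∀ s : ℝ, s ∈ Set.Ici (0:ℝ) → (fun s : ℝ => h (x + s • (-1:ℂ))) s = (fun _ : ℝ => (0:ℂ)) s := by
      intro s hs
      have hs' := Set.mem_Ici.mp hs
      have hxv : x + s • (-1:ℂ) = ((x.re - s : ℝ) : ℂ) := by
        rw [← hxeq]; push_cast [Complex.real_smul]; simp; ring
      show h (x + s • (-1:ℂ)) = 0
      rw [hxv]
      exact hneg _ (by linarith)
    have hu : UniqueDiffWithinAt ℝ (Set.Ici (0:ℝ)) 0 := uniqueDiffOn_Ici 0 0 Set.self_mem_Ici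
    have d1 : derivWithin (fun s : ℝ => h (x + s • (-1:ℂ))) (Set.Ici 0) 0 = A (-1) :=
      (hhp.hasDerivWithinAt).derivWithin hu
    have d2 : derivWithin (fun s : ℝ => h (x + s • (-1:ℂ))) (Set.Ici 0) 0 = 0 := by
      have hz : HasDerivWithinAt (fun _ : ℝ => (0:ℂ)) 0 (Set.Ici 0) 0 :=
        (hasDerivAt_const 0 (0:ℂ)).hasDerivWithinAt
      have := hz.congr heq0 (heq0 0 Set.self_mem_Ici)
      exact this.derivWithin hu
    have : A (-1:ℂ) = 0 := by rw [← d1, d2]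
    have := congrArg Neg.neg this
    simpa using this
  refine ⟨hNx, ?_⟩
  have e1 : B 1 = B (2 + Complex.I) - B (1 + Complex.I) := by
    rw [← map_sub]
    norm_num
  have e2 : A 1 = A (2 + Complex.I) - A (1 + Complex.I) := by
    rw [← map_sub]
    norm_num
  rw [e1, ← hdir _ (by simp), ← hdir _ (by simp), ← e2, hA1]


-- ## Bridging `psi` to the models

lemma coer (α : ℝ) (z : ℂ) : (α:ℂ) * (‖z‖ : ℂ)^2 = tt α z := by
  rw [tt, Complex.mul_conj]
  congr 1
  norm_cast
  exact Complex.sq_norm z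

lemma inner_eq (α β : ℝ) (m : ℤ) :
    (fun w : ℂ => w ^ ((β:ℂ) + (m:ℂ)) * Complex.exp (-(α * ‖w‖ ^ 2)))
      = mdl α ((β:ℂ) + (m:ℂ)) 1 := by
  funext w
  rw [mdl]
  simp only [Polynomial.eval_one, mul_one]
  rw [show -(tt α w) = -((α:ℂ) * (‖w‖ : ℂ)^2) by rw [coer]]

lemma outer_exp (α : ℝ) (z : ℂ) :
    Complex.exp ((α:ℂ) * (‖z‖ : ℂ)^2) = Complex.exp (tt α z) := by
  rw [coer]

lemma wdz_zero_of_nondiff {f : ℂ → ℂ} {z : ℂ} (h : ¬ DifferentiableAt ℝ f z) :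
    wdz f z = 0 := by
  rw [wdz, fderiv_zero_of_not_differentiableAt h]
  simp

lemma wdzbar_zero_of_nondiff {f : ℂ → ℂ} {z : ℂ} (h : ¬ DifferentiableAt ℝ f z) :
    wdzbar f z = 0 := by
  rw [wdzbar, fderiv_zero_of_not_differentiableAt h]
  simp

lemma psi_eq_slit (α β : ℝ) (n : ℕ) (m : ℤ) :
    Set.EqOn (psi α β n m) (PSIN α n m (QQ ((β:ℂ)+(m:ℂ)) n)) Complex.slitPlane := by
  intro z hzs
  have hz0 : z ≠ 0 := Complex.slitPlane_ne_zero hzs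
  rw [psi, inner_eq α β m, iter_cpow α ((β:ℂ)+(m:ℂ)) n z hzs, PSIN, mdl]
  have hpow : z ^ (-(β:ℂ)) * z ^ (((β:ℂ)+(m:ℂ)) - (n:ℕ)) = z ^ ((m - (n:ℕ) : ℤ)) := by
    rw [← Complex.cpow_add _ _ hz0, show (-(β:ℂ)) + (((β:ℂ)+(m:ℂ)) - (n:ℕ)) = ((m - (n:ℕ) : ℤ) : ℂ)
      by push_cast; ring, Complex.cpow_intCast]
  have hexp : Complex.exp (tt α z) * Complex.exp (-(tt α z)) = 1 := by
    rw [← Complex.exp_add]; simp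
  rw [outer_exp α z]
  calc (-1:ℂ)^n * z ^ (-(β:ℂ)) * Complex.exp (tt α z) *
        (z ^ (((β:ℂ)+(m:ℂ)) - (n:ℕ)) * (Complex.exp (-(tt α z)) * (QQ ((β:ℂ)+(m:ℂ)) n).eval (tt α z)))
      = (-1:ℂ)^n * (z ^ (-(β:ℂ)) * z ^ (((β:ℂ)+(m:ℂ)) - (n:ℕ))) *
        (Complex.exp (tt α z) * Complex.exp (-(tt α z))) * (QQ ((β:ℂ)+(m:ℂ)) n).eval (tt α z) := by
        ring
    _ = (-1:ℂ)^n * z ^ ((m - (n:ℕ) : ℤ)) * (QQ ((β:ℂ)+(m:ℂ)) n).eval (tt α z) := by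
        rw [hpow, hexp]; ring

lemma psi_eq_zpow (α β : ℝ) (n : ℕ) (m : ℤ) (j : ℤ) (hj : (β:ℂ) + (m:ℂ) = (j:ℂ)) :
    ∀ z : ℂ, z ≠ 0 → psi α β n m z = PSIN α n m (QQ ((β:ℂ)+(m:ℂ)) n) z := by
  intro z hz0
  have hinnerz : (fun w : ℂ => w ^ ((β:ℂ) + (m:ℂ)) * Complex.exp (-(α * ‖w‖ ^ 2)))
      = mdlz α j 1 := by
    rw [inner_eq α β m]
    funext w
    rw [mdl, mdlz, hj, Complex.cpow_intCast]
  rw [psi, hinnerz, iter_zpow α j n z hz0, PSIN, mdlz]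
  have hβ : (β:ℂ) = (j:ℂ) - (m:ℂ) := by linear_combination hj
  have hpow : z ^ (-(β:ℂ)) * z ^ ((j - (n:ℕ) : ℤ)) = z ^ ((m - (n:ℕ) : ℤ)) := by
    rw [← Complex.cpow_intCast z (j - (n:ℕ)), ← Complex.cpow_add _ _ hz0,
      show (-(β:ℂ)) + ((j - (n:ℕ) : ℤ) : ℂ) = ((m - (n:ℕ) : ℤ) : ℂ) by rw [hβ]; push_cast; ring,
      Complex.cpow_intCast]
  have hexp : Complex.exp (tt α z) * Complex.exp (-(tt α z)) = 1 := by
    rw [← Complex.exp_add]; simp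
  have hQ : QQ ((β:ℂ)+(m:ℂ)) n = QQ ((j:ℤ):ℂ) n := by rw [hj]
  rw [outer_exp α z]
  calc (-1:ℂ)^n * z ^ (-(β:ℂ)) * Complex.exp (tt α z) *
        (z ^ ((j - (n:ℕ) : ℤ)) * (Complex.exp (-(tt α z)) * (QQ ((j:ℤ):ℂ) n).eval (tt α z)))
      = (-1:ℂ)^n * (z ^ (-(β:ℂ)) * z ^ ((j - (n:ℕ) : ℤ))) *
        (Complex.exp (tt α z) * Complex.exp (-(tt α z))) * (QQ ((j:ℤ):ℂ) n).eval (tt α z) := by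
        ring
    _ = (-1:ℂ)^n * z ^ ((m - (n:ℕ) : ℤ)) * (QQ ((β:ℂ)+(m:ℂ)) n).eval (tt α z) := by
        rw [hpow, hexp, hQ]; ring

lemma psi_eq_n0 (α β : ℝ) (m : ℤ) :
    ∀ z : ℂ, z ≠ 0 → psi α β 0 m z = PSIN α 0 m (QQ ((β:ℂ)+(m:ℂ)) 0) z := by
  intro z hz0
  rw [psi, inner_eq α β m, Function.iterate_zero_apply, PSIN, mdl]
  have hpow : z ^ (-(β:ℂ)) * z ^ ((β:ℂ)+(m:ℂ)) = z ^ ((m - ((0:ℕ):ℤ) : ℤ)) := by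
    rw [← Complex.cpow_add _ _ hz0, show (-(β:ℂ)) + ((β:ℂ)+(m:ℂ)) = ((m - ((0:ℕ):ℤ) : ℤ) : ℂ)
      by push_cast; ring, Complex.cpow_intCast]
  have hexp : Complex.exp (tt α z) * Complex.exp (-(tt α z)) = 1 := by
    rw [← Complex.exp_add]; simp
  rw [outer_exp α z]
  calc (-1:ℂ)^0 * z ^ (-(β:ℂ)) * Complex.exp (tt α z) *
        (z ^ ((β:ℂ)+(m:ℂ)) * (Complex.exp (-(tt α z)) * (QQ ((β:ℂ)+(m:ℂ)) 0).eval (tt α z)))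
      = (-1:ℂ)^0 * (z ^ (-(β:ℂ)) * z ^ ((β:ℂ)+(m:ℂ))) *
        (Complex.exp (tt α z) * Complex.exp (-(tt α z))) * (QQ ((β:ℂ)+(m:ℂ)) 0).eval (tt α z) := by
        ring
    _ = (-1:ℂ)^0 * z ^ ((m - ((0:ℕ):ℤ) : ℤ)) * (QQ ((β:ℂ)+(m:ℂ)) 0).eval (tt α z) := by
        rw [hpow, hexp]; ring

lemma main_eq_on_open (α β : ℝ) (n : ℕ) (m : ℤ) {S : Set ℂ} (hS : IsOpen S)
    (heq : Set.EqOn (psi α β n m) (PSIN α n m (QQ ((β:ℂ)+(m:ℂ)) n)) S) {z : ℂ}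
    (hzS : z ∈ S) (hz : z ≠ 0) :
    -(wdz (wdzbar (psi α β n m)) z) + (α:ℂ) * z * wdz (psi α β n m) z
        - ((β:ℂ)/z) * wdzbar (psi α β n m) z = (α:ℂ) * (m:ℂ) * psi α β n m z := by
  have hev : psi α β n m =ᶠ[nhds z] PSIN α n m (QQ ((β:ℂ)+(m:ℂ)) n) :=
    Filter.eventuallyEq_of_mem (hS.mem_nhds hzS) heq
  have hev2 : wdzbar (psi α β n m) =ᶠ[nhds z] wdzbar (PSIN α n m (QQ ((β:ℂ)+(m:ℂ)) n)) := by
    refine Filter.eventuallyEq_of_mem (hS.mem_nhds hzS) (fun w hw => ?_)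
    exact wdzbar_congr (Filter.eventuallyEq_of_mem (hS.mem_nhds hw) heq)
  rw [wdz_congr hev2, wdz_congr hev, wdzbar_congr hev, heq hzS]
  exact pde_PSIN α β n m hz

-- ## The slit (negative real axis) case

lemma cpow_lower {z : ℂ} (hz : z.im < 0) (c : ℂ) :
    z ^ c = Complex.exp (-(c * (Real.pi : ℂ) * Complex.I)) * (-z) ^ c := by
  have hz0 : z ≠ 0 := fun h => by simp [h] at hz
  have hnz : -z ≠ 0 := neg_ne_zero.mpr hz0
  have hlog : Complex.log z = Complex.log (-z) - (Real.pi : ℂ) * Complex.I := by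
    rw [Complex.log, Complex.log, norm_neg,
      Complex.arg_neg_eq_arg_add_pi_of_im_neg hz]
    push_cast
    ring
  rw [Complex.cpow_def_of_ne_zero hz0, Complex.cpow_def_of_ne_zero hnz, ← Complex.exp_add, hlog]
  ring_nf

lemma cpow_slitpt {x : ℂ} (hre : x.re < 0) (him : x.im = 0) (c : ℂ) :
    x ^ c = Complex.exp (c * (Real.pi : ℂ) * Complex.I) * (-x) ^ c := by
  have hx0 : x ≠ 0 := fun h => by rw [h] at hre; simp at hre
  have hnx : -x ≠ 0 := neg_ne_zero.mpr hx0
  have hargx : x.arg = Real.pi := Complex.arg_eq_pi_iff.mpr ⟨hre, him⟩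
  have hargnx : (-x).arg = 0 := by
    rw [Complex.arg_eq_zero_iff]
    constructor
    · simp; linarith
    · simp [him]
  have hlog : Complex.log x = Complex.log (-x) + (Real.pi : ℂ) * Complex.I := by
    rw [Complex.log, Complex.log, norm_neg, hargx, hargnx]
    push_cast
    ring
  rw [Complex.cpow_def_of_ne_zero hx0, Complex.cpow_def_of_ne_zero hnx, ← Complex.exp_add, hlog]
  ring_nf

lemma conj_real {x : ℂ} (him : x.im = 0) : (starRingEnd ℂ) x = x :=
  Complex.conj_eq_iff_im.mpr him

lemma tt_ne_zero {α : ℝ} (hα : 0 < α) {x : ℂ} (hx0 : x ≠ 0) : tt α x ≠ 0 := by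
  rw [tt]
  apply mul_ne_zero
  · exact_mod_cast hα.ne'
  · exact mul_ne_zero hx0 (fun h => hx0 (by simpa using congrArg (starRingEnd ℂ) h))

lemma cpow_ne_zero' {w : ℂ} (hw : w ≠ 0) (c : ℂ) : w ^ c ≠ 0 := by
  rw [Complex.cpow_def_of_ne_zero hw]
  exact Complex.exp_ne_zero _

lemma exp_ne_one_of_notint {γ : ℂ} (hγ : ∀ i : ℤ, γ ≠ (i:ℂ)) :
    Complex.exp (2 * γ * (Real.pi:ℂ) * Complex.I) ≠ 1 := by
  intro h
  rw [Complex.exp_eq_one_iff] at h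
  obtain ⟨i, hi⟩ := h
  apply hγ i
  have hpi : ((Real.pi : ℂ)) ≠ 0 := by exact_mod_cast Real.pi_ne_zero
  have hI : Complex.I ≠ 0 := Complex.I_ne_zero
  have h2 : γ * (2 * (Real.pi:ℂ) * Complex.I) = (i:ℂ) * (2 * (Real.pi:ℂ) * Complex.I) := by
    linear_combination hi
  have hne : (2 * (Real.pi:ℂ) * Complex.I) ≠ 0 :=
    mul_ne_zero (mul_ne_zero two_ne_zero hpi) hI
  exact mul_right_cancel₀ hne h2

/-- `f₀ = mdl` itself is not real-differentiable at points of the open negative real axis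
(for non-integer exponent): it jumps across the branch cut. -/
lemma f0_nondiff (α : ℝ) {γ : ℂ} (hγ : ∀ i : ℤ, γ ≠ (i:ℂ)) {x : ℂ}
    (hre : x.re < 0) (him : x.im = 0) : ¬ DifferentiableAt ℝ (mdl α γ 1) x := by
  intro hd
  have hx0 : x ≠ 0 := fun h => by rw [h] at hre; simp at hre
  have hnx : -x ≠ 0 := neg_ne_zero.mpr hx0
  have hnxs : -x ∈ Complex.slitPlane := Or.inl (by simpa using hre)
  -- lower comparison function
  set NB : ℂ → ℂ := fun w =>
    (Complex.exp (-(γ * (Real.pi:ℂ) * Complex.I)) * (-w) ^ γ) *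
      (Complex.exp (-(tt α w)) * (1 : Polynomial ℂ).eval (tt α w)) with hNB
  have hpNB : HasW (fun w : ℂ => Complex.exp (-(γ * (Real.pi:ℂ) * Complex.I)) * (-w) ^ γ)
      (Complex.exp (-(γ * (Real.pi:ℂ) * Complex.I)) * (γ * (-x) ^ (γ-1) * (-1))) 0 x := by
    have h1 : HasW (fun w : ℂ => -w) (-1) 0 x := by
      simpa using (hasW_id x).neg
    have h2 : HasDerivAt (fun w : ℂ => w ^ γ) (γ * (-x) ^ (γ-1)) (-x) :=
      (Complex.hasStrictDerivAt_cpow_const hnxs).hasDerivAt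
    have h3 := (HasW.comp h2 h1).const_mul (Complex.exp (-(γ * (Real.pi:ℂ) * Complex.I)))
    exact h3.congr_ab (by ring) (by ring)
  have hNBW := hasW_model α (1 : Polynomial ℂ) hpNB
  have hNBc : ContinuousAt NB x := hNBW.diffAt.continuousAt
  -- f = NB on the lower half plane
  have hlow : ∀ z : ℂ, z.im < 0 → mdl α γ 1 z = NB z := by
    intro z hzi
    rw [mdl, hNB, cpow_lower hzi]
  -- path from below
  have hpath : Filter.Tendsto (fun s : ℝ => x - (s : ℂ) * Complex.I)
      (nhdsWithin 0 (Set.Ioi 0)) (nhds x) := by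
    have hcont : Continuous (fun s : ℝ => x - (s : ℂ) * Complex.I) := by continuity
    refine Filter.Tendsto.mono_left ?_ (nhdsWithin_le_nhds (s := Set.Ioi 0))
    simpa using hcont.tendsto 0
  have l1 : Filter.Tendsto (fun s : ℝ => mdl α γ 1 (x - (s:ℂ) * Complex.I))
      (nhdsWithin 0 (Set.Ioi 0)) (nhds (mdl α γ 1 x)) := (hd.continuousAt.tendsto).comp hpath
  have l2 : Filter.Tendsto (fun s : ℝ => NB (x - (s:ℂ) * Complex.I))
      (nhdsWithin 0 (Set.Ioi 0)) (nhds (NB x)) := (hNBc.tendsto).comp hpath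
  have l3 : Filter.Tendsto (fun s : ℝ => mdl α γ 1 (x - (s:ℂ) * Complex.I))
      (nhdsWithin 0 (Set.Ioi 0)) (nhds (NB x)) := by
    refine l2.congr' ?_
    filter_upwards [self_mem_nhdsWithin] with s hs
    refine (hlow _ ?_).symm
    simp [Complex.sub_im, him]
    exact hs
  have hkey : mdl α γ 1 x = NB x := tendsto_nhds_unique l1 l3
  -- but the values differ
  rw [mdl, hNB, cpow_slitpt hre him] at hkey
  simp only [Polynomial.eval_one, mul_one] at hkey
  have hfac : ((-x) ^ γ * Complex.exp (-(tt α x))) ≠ 0 :=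
    mul_ne_zero (cpow_ne_zero' hnx γ) (Complex.exp_ne_zero _)
  have hkey' : Complex.exp (γ * (Real.pi:ℂ) * Complex.I) * ((-x) ^ γ * Complex.exp (-(tt α x)))
      = Complex.exp (-(γ * (Real.pi:ℂ) * Complex.I)) * ((-x) ^ γ * Complex.exp (-(tt α x))) := by
    linear_combination hkey
  have hexpeq : Complex.exp (γ * (Real.pi:ℂ) * Complex.I)
      = Complex.exp (-(γ * (Real.pi:ℂ) * Complex.I)) := mul_right_cancel₀ hfac hkey'
  apply exp_ne_one_of_notint hγ
  rw [show (2 : ℂ) * γ * (Real.pi:ℂ) * Complex.I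
      = γ * (Real.pi:ℂ) * Complex.I - (-(γ * (Real.pi:ℂ) * Complex.I)) by ring,
    Complex.exp_sub, hexpeq]
  exact div_self (Complex.exp_ne_zero _)

/-- Main slit induction: the iterated Wirtinger derivatives of the model are
non-differentiable at slit points and (for `k ≥ 1`) vanish there. -/
lemma fk_facts (α : ℝ) (hα : 0 < α) {γ : ℂ} (hγ : ∀ i : ℤ, γ ≠ (i:ℂ)) :
    ∀ k : ℕ, ∀ x : ℂ, x.re < 0 → x.im = 0 →
      (¬ DifferentiableAt ℝ (wdz^[k] (mdl α γ 1)) x) ∧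
      (1 ≤ k → wdz^[k] (mdl α γ 1) x = 0) := by
  intro k
  induction k with
  | zero =>
    intro x hre him
    constructor
    · rw [Function.iterate_zero_apply]  -- this rewrites in the goal?
      exact f0_nondiff α hγ hre him
    · omega
  | succ k ih =>
    have hvan : ∀ x : ℂ, x.re < 0 → x.im = 0 → wdz^[k+1] (mdl α γ 1) x = 0 := by
      intro x hre him
      rw [Function.iterate_succ_apply']
      exact wdz_zero_of_nondiff (ih x hre him).1
    intro x hre him
    refine ⟨?_, fun _ => hvan x hre him⟩
    intro hd
    have hx0 : x ≠ 0 := fun h => by rw [h] at hre; simp at hre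
    have hnx : -x ≠ 0 := neg_ne_zero.mpr hx0
    have hnxs : -x ∈ Complex.slitPlane := Or.inl (by simpa using hre)
    set c : ℂ := γ - ((k+1 : ℕ) : ℂ) with hc
    set Q : Polynomial ℂ := QQ γ (k+1) with hQdef
    set px : ℂ := Complex.exp (c * (Real.pi:ℂ) * Complex.I) * (-x) ^ c with hpx
    -- the analytic branch through the upper half plane
    set NT : ℂ → ℂ := fun w =>
      (Complex.exp (c * (Real.pi:ℂ) * Complex.I) * (-w) ^ c) *
        (Complex.exp (-(tt α w)) * Q.eval (tt α w)) with hNT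
    have hpNT : HasW (fun w : ℂ => Complex.exp (c * (Real.pi:ℂ) * Complex.I) * (-w) ^ c)
        (Complex.exp (c * (Real.pi:ℂ) * Complex.I) * (c * (-x) ^ (c-1) * (-1))) 0 x := by
      have h1 : HasW (fun w : ℂ => -w) (-1) 0 x := by
        simpa using (hasW_id x).neg
      have h2 : HasDerivAt (fun w : ℂ => w ^ c) (c * (-x) ^ (c-1)) (-x) :=
        (Complex.hasStrictDerivAt_cpow_const hnxs).hasDerivAt
      have h3 := (HasW.comp h2 h1).const_mul (Complex.exp (c * (Real.pi:ℂ) * Complex.I))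
      exact h3.congr_ab (by ring) (by ring)
    have hNTW := hasW_model α Q hpNT
    have hup : ∀ z : ℂ, 0 < z.im → wdz^[k+1] (mdl α γ 1) z = NT z := by
      intro z hzi
      have hzs : z ∈ Complex.slitPlane := Or.inr (ne_of_gt hzi)
      rw [iter_cpow α γ (k+1) z hzs, mdl, hNT]
      rw [cpow_upper hzi c]
      try ring
    have hneg : ∀ y : ℝ, y < 0 → wdz^[k+1] (mdl α γ 1) (y:ℂ) = 0 := by
      intro y hy
      exact hvan (y:ℂ) (by simpa using hy) (by simp)
    obtain ⟨hN0, hB1⟩ := slit_key hre him hup hneg hNTW hd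
    -- extract the polynomial conditions
    set t₀ : ℂ := tt α x with ht₀
    have ht₀ne : t₀ ≠ 0 := tt_ne_zero hα hx0
    have hE : Complex.exp (-(t₀)) ≠ 0 := Complex.exp_ne_zero _
    have hpxne : px ≠ 0 := mul_ne_zero (Complex.exp_ne_zero _) (cpow_ne_zero' hnx c)
    have hQ0 : Q.eval t₀ = 0 := by
      have h1 : px * (Complex.exp (-(t₀)) * Q.eval t₀) = 0 := hN0
      rcases mul_eq_zero.mp h1 with h | h
      · exact absurd h hpxne
      · rcases mul_eq_zero.mp h with h' | h'
        · exact absurd h' hE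
        · exact h'
    have hB1' : Complex.exp (-(t₀)) * (Complex.exp (c * (Real.pi:ℂ) * Complex.I) * (c * (-x) ^ (c-1) * (-1)) * Q.eval t₀
          + px * ((α:ℂ) * (starRingEnd ℂ) x) * (Q.derivative - Q).eval t₀)
        + Complex.exp (-(t₀)) * (px * ((α:ℂ) * x) * (Q.derivative - Q).eval t₀) = 0 := by
      have := hB1
      rw [lmap_apply] at this
      simpa using this
    rw [conj_real him] at hB1'
    simp only [Polynomial.eval_sub] at hB1'
    have h2 : Complex.exp (-(t₀)) * px * (α:ℂ) * x * (2 * Q.derivative.eval t₀) = 0 := by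
      linear_combination hB1' - (Complex.exp (-(t₀)) * (Complex.exp (c * (Real.pi:ℂ) * Complex.I) * (c * (-x) ^ (c-1) * (-1)))
        - 2 * Complex.exp (-(t₀)) * px * (α:ℂ) * x) * hQ0
    have hαne : (α:ℂ) ≠ 0 := by exact_mod_cast hα.ne'
    have hQ'0 : Q.derivative.eval t₀ = 0 := by
      by_contra hne
      exact (mul_ne_zero (mul_ne_zero (mul_ne_zero (mul_ne_zero hE hpxne) hαne) hx0)
        (mul_ne_zero two_ne_zero hne)) h2
    exact no_common_root (ode_QQ γ (k+1)) (QQ_ne_zero hγ (k+1)) ht₀ne hQ0 hQ'0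

lemma psi_slit_zero (α β : ℝ) (hα : 0 < α) (n : ℕ) (m : ℤ) (hn : n ≠ 0)
    (hγ : ∀ i : ℤ, (β:ℂ) + (m:ℂ) ≠ (i:ℂ)) :
    ∀ x : ℂ, x.re < 0 → x.im = 0 → psi α β n m x = 0 := by
  intro x hre him
  rw [psi, inner_eq α β m,
    (fk_facts α hα hγ n x hre him).2 (Nat.one_le_iff_ne_zero.mpr hn), mul_zero]

lemma psi_nondiff (α β : ℝ) (hα : 0 < α) (n : ℕ) (m : ℤ) (hn : n ≠ 0)
    (hγ : ∀ i : ℤ, (β:ℂ) + (m:ℂ) ≠ (i:ℂ)) :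
    ∀ x : ℂ, x.re < 0 → x.im = 0 → ¬ DifferentiableAt ℝ (psi α β n m) x := by
  intro x hre him hd
  have hx0 : x ≠ 0 := fun h => by rw [h] at hre; simp at hre
  set Q : Polynomial ℂ := QQ ((β:ℂ)+(m:ℂ)) n with hQdef
  have hup : ∀ z : ℂ, 0 < z.im → psi α β n m z = PSIN α n m Q z := by
    intro z hzi
    exact psi_eq_slit α β n m (Or.inr (ne_of_gt hzi))
  have hneg : ∀ y : ℝ, y < 0 → psi α β n m (y:ℂ) = 0 := by
    intro y hy
    exact psi_slit_zero α β hα n m hn hγ (y:ℂ) (by simpa using hy) (by simp)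
  have hNW := hasW_PSIN α n m Q hx0
  obtain ⟨hN0, hB1⟩ := slit_key hre him hup hneg hNW hd
  set t₀ : ℂ := tt α x with ht₀
  have ht₀ne : t₀ ≠ 0 := tt_ne_zero hα hx0
  have hzp : x ^ ((m - n : ℤ)) ≠ 0 := zpow_ne_zero _ hx0
  have hsgn : ((-1:ℂ))^n ≠ 0 := pow_ne_zero _ (by norm_num)
  have hQ0 : Q.eval t₀ = 0 := by
    have h1 : (-1:ℂ)^n * x ^ ((m - n : ℤ)) * Q.eval t₀ = 0 := hN0
    rcases mul_eq_zero.mp h1 with h | h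
    · exact absurd h (mul_ne_zero hsgn hzp)
    · exact h
  have hB1' : (-1:ℂ)^n * (((m - n : ℤ):ℂ) * x ^ (m - n - 1 : ℤ) * Q.eval t₀
        + x ^ (m - n : ℤ) * Q.derivative.eval t₀ * ((α:ℂ) * (starRingEnd ℂ) x))
      + (-1:ℂ)^n * (x ^ (m - n : ℤ) * Q.derivative.eval t₀ * ((α:ℂ) * x)) = 0 := by
    have := hB1
    rw [lmap_apply] at this
    simpa using this
  rw [conj_real him] at hB1'
  have h2 : (-1:ℂ)^n * x ^ (m - n : ℤ) * (α:ℂ) * x * (2 * Q.derivative.eval t₀) = 0 := by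
    linear_combination hB1' - ((-1:ℂ)^n * ((m - n : ℤ):ℂ) * x ^ (m - n - 1 : ℤ)) * hQ0
  have hαne : (α:ℂ) ≠ 0 := by exact_mod_cast hα.ne'
  have hQ'0 : Q.derivative.eval t₀ = 0 := by
    by_contra hne
    exact (mul_ne_zero (mul_ne_zero (mul_ne_zero (mul_ne_zero hsgn hzp) hαne) hx0)
      (mul_ne_zero two_ne_zero hne)) h2
  exact no_common_root (ode_QQ ((β:ℂ)+(m:ℂ)) n) (QQ_ne_zero hγ n) ht₀ne hQ0 hQ'0

lemma W_nondiff (α β : ℝ) (hα : 0 < α) (n : ℕ) (m : ℤ) (hn : n ≠ 0)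
    (hγ : ∀ i : ℤ, (β:ℂ) + (m:ℂ) ≠ (i:ℂ)) :
    ∀ x : ℂ, x.re < 0 → x.im = 0 → ¬ DifferentiableAt ℝ (wdzbar (psi α β n m)) x := by
  intro x hre him hd
  have hx0 : x ≠ 0 := fun h => by rw [h] at hre; simp at hre
  set Q : Polynomial ℂ := QQ ((β:ℂ)+(m:ℂ)) n with hQdef
  have hup : ∀ z : ℂ, 0 < z.im →
      wdzbar (psi α β n m) z = (fun w => (α:ℂ) * PSIN α n (m+1) Q.derivative w) z := by
    intro z hzi
    have hzs : z ∈ Complex.slitPlane := Or.inr (ne_of_gt hzi)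
    have hev : psi α β n m =ᶠ[nhds z] PSIN α n m Q :=
      Filter.eventuallyEq_of_mem (Complex.isOpen_slitPlane.mem_nhds hzs) (psi_eq_slit α β n m)
    rw [wdzbar_congr hev, wdzbar_PSIN_eq α n m Q (Complex.slitPlane_ne_zero hzs)]
  have hneg : ∀ y : ℝ, y < 0 → wdzbar (psi α β n m) (y:ℂ) = 0 := by
    intro y hy
    exact wdzbar_zero_of_nondiff (psi_nondiff α β hα n m hn hγ (y:ℂ) (by simpa using hy) (by simp))
  have hNW := (hasW_PSIN α n (m+1) Q.derivative hx0).const_mul ((α:ℂ))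
  obtain ⟨hN0, hB1⟩ := slit_key hre him hup hneg hNW hd
  set t₀ : ℂ := tt α x with ht₀
  have ht₀ne : t₀ ≠ 0 := tt_ne_zero hα hx0
  have hzp : x ^ ((m + 1 - n : ℤ)) ≠ 0 := zpow_ne_zero _ hx0
  have hsgn : ((-1:ℂ))^n ≠ 0 := pow_ne_zero _ (by norm_num)
  have hαne : (α:ℂ) ≠ 0 := by exact_mod_cast hα.ne'
  have hQ'0 : Q.derivative.eval t₀ = 0 := by
    have h1 : (α:ℂ) * ((-1:ℂ)^n * x ^ ((m + 1 - n : ℤ)) * Q.derivative.eval t₀) = 0 := hN0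
    rcases mul_eq_zero.mp h1 with h | h
    · exact absurd h hαne
    · rcases mul_eq_zero.mp h with h' | h'
      · exact absurd h' (mul_ne_zero hsgn hzp)
      · exact h'
  have hB1' : (α:ℂ) * ((-1:ℂ)^n * (((m + 1 - n : ℤ):ℂ) * x ^ (m + 1 - n - 1 : ℤ) * Q.derivative.eval t₀
        + x ^ (m + 1 - n : ℤ) * Q.derivative.derivative.eval t₀ * ((α:ℂ) * (starRingEnd ℂ) x)))
      + (α:ℂ) * ((-1:ℂ)^n * (x ^ (m + 1 - n : ℤ) * Q.derivative.derivative.eval t₀ * ((α:ℂ) * x))) = 0 := by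
    have := hB1
    rw [lmap_apply] at this
    simpa using this
  rw [conj_real him] at hB1'
  have h2 : (α:ℂ) * (-1:ℂ)^n * x ^ (m + 1 - n : ℤ) * (α:ℂ) * x * (2 * Q.derivative.derivative.eval t₀) = 0 := by
    linear_combination hB1' - ((α:ℂ) * (-1:ℂ)^n * ((m + 1 - n : ℤ):ℂ) * x ^ (m + 1 - n - 1 : ℤ)) * hQ'0
  have hQ''0 : Q.derivative.derivative.eval t₀ = 0 := by
    by_contra hne
    exact (mul_ne_zero (mul_ne_zero (mul_ne_zero (mul_ne_zero (mul_ne_zero hαne hsgn) hzp) hαne) hx0)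
      (mul_ne_zero two_ne_zero hne)) h2
  have hod : OD ((β:ℂ)+(m:ℂ) - n + 1) ((n:ℂ) - 1) Q.derivative := (ode_QQ ((β:ℂ)+(m:ℂ)) n).step
  exact no_common_root hod (QQ_deriv_ne_zero hγ (Nat.pos_of_ne_zero hn)) ht₀ne hQ'0 hQ''0

end WAux

theorem stmt9 (α β : ℝ) (hα : 0 < α) (n : ℕ) (m : ℤ) (hm : -β - 1 < (m:ℝ)) (z : ℂ)
    (hz : z ≠ 0) :
    -(wdz (wdzbar (psi α β n m)) z) + (α:ℂ) * z * wdz (psi α β n m) z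
        - ((β:ℂ)/z) * wdzbar (psi α β n m) z =
      (α:ℂ) * (m:ℂ) * psi α β n m z := by
  rcases Nat.eq_zero_or_pos n with hn | hn
  · subst hn
    refine WAux.main_eq_on_open α β 0 m (S := {(0:ℂ)}ᶜ) isOpen_compl_singleton
      (fun w hw => WAux.psi_eq_n0 α β m w (by simpa using hw)) (by simpa using hz) hz
  · by_cases hint : ∃ j : ℤ, (β:ℂ) + (m:ℂ) = (j:ℂ)
    · obtain ⟨j, hj⟩ := hint
      refine WAux.main_eq_on_open α β n m (S := {(0:ℂ)}ᶜ) isOpen_compl_singleton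
        (fun w hw => WAux.psi_eq_zpow α β n m j hj w (by simpa using hw)) (by simpa using hz) hz
    · push_neg at hint
      by_cases hslit : z ∈ Complex.slitPlane
      · exact WAux.main_eq_on_open α β n m Complex.isOpen_slitPlane
          (WAux.psi_eq_slit α β n m) hslit hz
      · have him : z.im = 0 := by
          by_contra h
          exact hslit (Or.inr h)
        have hre : z.re < 0 := by
          rcases lt_trichotomy z.re 0 with h | h | h
          · exact h
          · exact absurd (Complex.ext (by simpa using h) (by simpa using him)) hz
          · exact absurd (Or.inl h) hslit
        have hn' : n ≠ 0 := hn.ne'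
        have h1 := WAux.psi_nondiff α β hα n m hn' hint z hre him
        have h2 := WAux.W_nondiff α β hα n m hn' hint z hre him
        rw [WAux.wdz_zero_of_nondiff h2, WAux.wdz_zero_of_nondiff h1,
          WAux.wdzbar_zero_of_nondiff h1,
          WAux.psi_slit_zero α β hα n m hn' hint z hre him]
        ring
end

section
/- For every z, w ∈ ℂ and real α > 0, the Gaussian reproducing identity e^{αzw} = (α/π) ∫_ℂ exp(-α|ξ|² + α(ξz + ξ̄w)) dλ(ξ) holds, where dλ is Lebesgue measure on ℂ. -/
open Complex MeasureTheory

theorem stmt19 (α : ℝ) (hα : 0 < α) (z w : ℂ) :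
    Complex.exp ((α:ℂ)*z*w) =
      ((α / Real.pi : ℝ) : ℂ) *
        ∫ ξ : ℂ, Complex.exp (-(α:ℂ) * (‖ξ‖ : ℂ)^2 +
          (α:ℂ) * (ξ*z + (starRingEnd ℂ ξ)*w)) := by
  have hπ : (0:ℝ) < Real.pi := Real.pi_pos
  have hαc : ((α:ℂ)) ≠ 0 := by exact_mod_cast hα.ne'
  set F : ℂ → ℂ := fun ξ => Complex.exp (-(α:ℂ) * (‖ξ‖ : ℂ)^2 +
          (α:ℂ) * (ξ*z + (starRingEnd ℂ ξ)*w)) with hF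
  have key : (∫ ξ : ℂ, F ξ) = ∫ p : ℝ × ℝ, F (p.1 + p.2 * Complex.I) := by
    rw [← (Complex.volume_preserving_equiv_real_prod.symm).integral_comp
      Complex.measurableEquivRealProd.symm.measurableEmbedding F]
    refine integral_congr_ae (Filter.Eventually.of_forall fun p => ?_)
    simp [Complex.measurableEquivRealProd, Complex.equivRealProdCLM_symm_apply]
  have hb : (-(α:ℂ)).re < 0 := by simp [hα]
  have hsplit : ∀ x y : ℝ, F ((x:ℂ) + (y:ℂ) * Complex.I) =
      Complex.exp (-(α:ℂ)*(x:ℂ)^2 + ((α:ℂ)*(z+w))*(x:ℂ) + 0) *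
      Complex.exp (-(α:ℂ)*(y:ℂ)^2 + (Complex.I*(α:ℂ)*(z-w))*(y:ℂ) + 0) := by
    intro x y
    rw [← Complex.exp_add, hF]
    simp only []
    congr 1
    have habs : ((‖(x:ℂ) + (y:ℂ)*Complex.I‖ : ℝ) : ℂ)^2 = (x:ℂ)^2 + (y:ℂ)^2 := by
      rw [← Complex.ofReal_pow, Complex.sq_norm, Complex.normSq_add_mul_I]
      push_cast; ring
    rw [habs]
    simp only [map_add, map_mul, Complex.conj_I, Complex.conj_ofReal]
    ring
  rw [key]
  have := integral_prod_mul (μ := (volume : Measure ℝ)) (ν := (volume : Measure ℝ))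
    (fun x : ℝ => Complex.exp (-(α:ℂ)*(x:ℂ)^2 + ((α:ℂ)*(z+w))*(x:ℂ) + 0))
    (fun y : ℝ => Complex.exp (-(α:ℂ)*(y:ℂ)^2 + (Complex.I*(α:ℂ)*(z-w))*(y:ℂ) + 0))
  have hrw : (∫ p : ℝ × ℝ, F (p.1 + p.2 * Complex.I)) =
      (∫ x : ℝ, Complex.exp (-(α:ℂ)*(x:ℂ)^2 + ((α:ℂ)*(z+w))*(x:ℂ) + 0)) *
      (∫ y : ℝ, Complex.exp (-(α:ℂ)*(y:ℂ)^2 + (Complex.I*(α:ℂ)*(z-w))*(y:ℂ) + 0)) := by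
    rw [← this]
    exact integral_congr_ae (Filter.Eventually.of_forall fun p => hsplit p.1 p.2)
  rw [hrw, integral_cexp_quadratic hb ((α:ℂ)*(z+w)) 0,
    integral_cexp_quadratic hb (Complex.I*(α:ℂ)*(z-w)) 0]
  rw [neg_neg]
  have hne : ((Real.pi : ℂ) / (α:ℂ)) ≠ 0 := by
    apply div_ne_zero _ hαc
    exact_mod_cast hπ.ne'
  rw [show ((Real.pi:ℂ)/(α:ℂ)) ^ (1/2 : ℂ) * Complex.exp (0 - ((α:ℂ)*(z+w))^2 / (4 * -(α:ℂ))) *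
      (((Real.pi:ℂ)/(α:ℂ)) ^ (1/2 : ℂ) * Complex.exp (0 - (Complex.I*(α:ℂ)*(z-w))^2 / (4 * -(α:ℂ)))) =
      (((Real.pi:ℂ)/(α:ℂ)) ^ (1/2 : ℂ) * ((Real.pi:ℂ)/(α:ℂ)) ^ (1/2 : ℂ)) *
      Complex.exp ((0 - ((α:ℂ)*(z+w))^2 / (4 * -(α:ℂ))) + (0 - (Complex.I*(α:ℂ)*(z-w))^2 / (4 * -(α:ℂ)))) by
    rw [Complex.exp_add]; ring]
  rw [← Complex.cpow_add _ _ hne]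
  norm_num
  have hexp : -(((α:ℂ)*(z+w))^2 / -(4*(α:ℂ))) + -((Complex.I*(α:ℂ)*(z-w))^2 / -(4*(α:ℂ)))
      = (α:ℂ)*z*w := by
    field_simp
    ring_nf
    rw [Complex.I_sq]
    ring
  rw [hexp]
  have hπc : ((Real.pi : ℂ)) ≠ 0 := by exact_mod_cast hπ.ne'
  field_simp
end
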